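/- arXiv:1810.11754 — 4 statements merged into one kernel-verified Lean document; each statement's English description precedes it below -/
import Mathlib

section
/- Lemma 5 (exact probability of tail blocks in the prior construction): Fix an even integer k ≥ 2 and n > k, and let a = 1/n, b = 1 − (k−2)/n. Let M be the k×k transition matrix with M(i,i) = b−a for odd i, M(i,i) = b − p_i and M(i,i−1) = p_i for even i (where 0 < p_i ≤ b−a for each even i), and all remaining entries equal to a. Let the Markov chain have uniform initial distribution on [k]. For an even state i and 1 ≤ ℓ ≤ n−1, let K_ℓ(i) = { x^n ∈ [k]^n : x_t ≠ i for all t ≤ n−ℓ and x_t = i for all t > n−ℓ }. Then Pr(X^n ∈ K_ℓ(i)) = ((k−1)/k) · (1 − 1/n)^{n−ℓ−1} · (1/n) · (1 − (k−2)/n − p_i)^{ℓ−1}. -/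
open Filter Finset
open scoped ENNReal Classical

noncomputable section

def IsProbVec {k : ℕ} (p : Fin k → ℝ) : Prop :=
  (∀ i, 0 ≤ p i) ∧ ∑ i, p i = 1

def IsTransMat {k : ℕ} (M : Fin k → Fin k → ℝ) : Prop :=
  ∀ i, IsProbVec (M i)

/-- Probability that a Markov chain with initial distribution `μ` and transition
matrix `M` produces the length-`n` sample sequence `x`. -/
def seqProb {k : ℕ} (n : ℕ) (μ : Fin k → ℝ) (M : Fin k → Fin k → ℝ)
    (x : Fin n → Fin k) : ℝ :=
  (if h : 0 < n then μ (x ⟨0, h⟩) else 1) *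
    ∏ t : Fin (n - 1),
      M (x ⟨t.1, by have := t.2; omega⟩) (x ⟨t.1 + 1, by have := t.2; omega⟩)

/-- `x` consists of states different from `i` (in its 1-indexed positions `t ≤ n - ℓ`)
followed by `ℓ` occurrences of the state `i`. -/
def IsTailSeq {k : ℕ} (n : ℕ) (x : Fin n → Fin k) (i : Fin k) (ℓ : ℕ) : Prop :=
  (∀ s : Fin n, s.1 < n - ℓ → x s ≠ i) ∧ (∀ s : Fin n, n - ℓ ≤ s.1 → x s = i)

lemma MjI (k n : ℕ) (hk2 : 2 ≤ k)
    (p : Fin k → ℝ) (M : Fin k → Fin k → ℝ)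
    (hModd : ∀ i : Fin k, ¬ Even (i.1 + 1) →
      M i i = (1 - ((k : ℝ) - 2) / n) - 1 / n ∧ ∀ j, j ≠ i → M i j = 1 / n)
    (hMeven : ∀ i : Fin k, Even (i.1 + 1) →
      (0 < p i ∧ p i ≤ (1 - ((k : ℝ) - 2) / n) - 1 / n) ∧
      M i i = (1 - ((k : ℝ) - 2) / n) - p i ∧
      M i ⟨i.1 - 1, Nat.lt_of_le_of_lt (Nat.sub_le _ _) i.2⟩ = p i ∧
      ∀ j : Fin k, j ≠ i → j.1 ≠ i.1 - 1 → M i j = 1 / n)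
    (i : Fin k) (hi : Even (i.1 + 1)) (j : Fin k) (hj : j ≠ i) :
    M j i = 1 / n := by
  have hiodd : i.1 % 2 = 1 := by have := Nat.even_iff.mp hi; omega
  by_cases hjE : Even (j.1 + 1)
  · have hjodd : j.1 % 2 = 1 := by have := Nat.even_iff.mp hjE; omega
    exact (hMeven j hjE).2.2.2 i (Ne.symm hj) (by omega)
  · exact (hModd j hjE).2 i (Ne.symm hj)

lemma rowSum (k n : ℕ) (hk2 : 2 ≤ k) (hkn : k < n)
    (p : Fin k → ℝ) (M : Fin k → Fin k → ℝ)
    (hModd : ∀ i : Fin k, ¬ Even (i.1 + 1) →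
      M i i = (1 - ((k : ℝ) - 2) / n) - 1 / n ∧ ∀ j, j ≠ i → M i j = 1 / n)
    (hMeven : ∀ i : Fin k, Even (i.1 + 1) →
      (0 < p i ∧ p i ≤ (1 - ((k : ℝ) - 2) / n) - 1 / n) ∧
      M i i = (1 - ((k : ℝ) - 2) / n) - p i ∧
      M i ⟨i.1 - 1, Nat.lt_of_le_of_lt (Nat.sub_le _ _) i.2⟩ = p i ∧
      ∀ j : Fin k, j ≠ i → j.1 ≠ i.1 - 1 → M i j = 1 / n)
    (i : Fin k) (hi : Even (i.1 + 1)) (j : Fin k) (hj : j ≠ i) :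
    ∑ c ∈ Finset.univ.erase i, M j c = 1 - 1 / (n : ℝ) := by
  have hiodd : i.1 % 2 = 1 := by have := Nat.even_iff.mp hi; omega
  have hn0 : (n : ℝ) ≠ 0 := by exact_mod_cast (by omega : n ≠ 0)
  have hjmem : j ∈ Finset.univ.erase i := Finset.mem_erase.mpr ⟨hj, Finset.mem_univ j⟩
  by_cases hjE : Even (j.1 + 1)
  · -- j even (1-indexed): has p j at j-1
    have hjodd : j.1 % 2 = 1 := by have := Nat.even_iff.mp hjE; omega
    have hk4 : 4 ≤ k := by
      have hik : i.1 < k := i.2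
      have hjk : j.1 < k := j.2
      have hij : i.1 ≠ j.1 := fun h => hj (Fin.ext h.symm)
      omega
    set j' : Fin k := ⟨j.1 - 1, by omega⟩ with hj'
    have hj'j : j' ≠ j := by simp [hj', Fin.ext_iff]; omega
    have hj'i : j' ≠ i := by simp [hj', Fin.ext_iff]; omega
    have hj'mem : j' ∈ (Finset.univ.erase i).erase j :=
      Finset.mem_erase.mpr ⟨hj'j, Finset.mem_erase.mpr ⟨hj'i, Finset.mem_univ _⟩⟩
    rw [← Finset.sum_erase_add _ _ hjmem, ← Finset.sum_erase_add _ _ hj'mem]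
    have hrest : ∀ c ∈ ((Finset.univ.erase i).erase j).erase j', M j c = 1 / n := by
      intro c hc
      simp only [Finset.mem_erase] at hc
      exact (hMeven j hjE).2.2.2 c hc.2.1 (fun h => hc.1 (Fin.ext h))
    rw [Finset.sum_congr rfl hrest, Finset.sum_const]
    have hcard : (((Finset.univ.erase i).erase j).erase j').card = k - 3 := by
      rw [Finset.card_erase_of_mem hj'mem, Finset.card_erase_of_mem hjmem,
        Finset.card_erase_of_mem (Finset.mem_univ i), Finset.card_univ, Fintype.card_fin]
      omega
    rw [hcard, (hMeven j hjE).2.1]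
    have := (hMeven j hjE).2.2.1
    have hMjj' : M j j' = p j := this
    rw [hMjj']
    have : ((k - 3 : ℕ) : ℝ) = (k : ℝ) - 3 := by
      push_cast [Nat.cast_sub (by omega : 3 ≤ k)]; ring
    rw [nsmul_eq_mul, this]
    field_simp
    ring
  · have hrest : ∀ c ∈ (Finset.univ.erase i).erase j, M j c = 1 / n := by
      intro c hc
      simp only [Finset.mem_erase] at hc
      exact (hModd j hjE).2 c hc.1
    rw [← Finset.sum_erase_add _ _ hjmem, Finset.sum_congr rfl hrest, Finset.sum_const]
    have hcard : ((Finset.univ.erase i).erase j).card = k - 2 := by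
      rw [Finset.card_erase_of_mem hjmem,
        Finset.card_erase_of_mem (Finset.mem_univ i), Finset.card_univ, Fintype.card_fin]
      omega
    rw [hcard, (hModd j hjE).1]
    have : ((k - 2 : ℕ) : ℝ) = (k : ℝ) - 2 := by
      push_cast [Nat.cast_sub hk2]; ring
    rw [nsmul_eq_mul, this]
    field_simp
    ring

lemma prefixSum (k n : ℕ) (hk2 : 2 ≤ k)
    (M : Fin k → Fin k → ℝ) (μ : Fin k → ℝ) (hμ : ∀ j, μ j = (k : ℝ)⁻¹)
    (i : Fin k)
    (hrow : ∀ j : Fin k, j ≠ i → ∑ c ∈ Finset.univ.erase i, M j c = 1 - 1 / (n : ℝ)) :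
    ∀ r : ℕ,
      ∑ y ∈ Finset.univ.filter (fun y : Fin (r+1) → Fin k => ∀ t, y t ≠ i),
          μ (y 0) * ∏ t : Fin r, M (y t.castSucc) (y t.succ)
        = (((k : ℝ) - 1) / k) * (1 - 1 / n) ^ r := by
  intro r
  induction r with
  | zero =>
    rw [show ∑ y ∈ Finset.univ.filter (fun y : Fin 1 → Fin k => ∀ t, y t ≠ i),
          μ (y 0) * ∏ t : Fin 0, M (y t.castSucc) (y t.succ)
        = ∑ c ∈ Finset.univ.erase i, μ c from ?_]
    · rw [Finset.sum_congr rfl (fun c _ => hμ c), Finset.sum_const,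
        Finset.card_erase_of_mem (Finset.mem_univ i), Finset.card_univ, Fintype.card_fin]
      have hck : ((k - 1 : ℕ) : ℝ) = (k : ℝ) - 1 := by
        push_cast [Nat.cast_sub (by omega : 1 ≤ k)]; ring
      rw [nsmul_eq_mul, hck, pow_zero]
      field_simp
    · refine Finset.sum_nbij' (fun y => y 0) (fun c => fun _ => c) ?_ ?_ ?_ ?_ ?_
      · intro y hy
        simp only [Finset.mem_filter] at hy
        exact Finset.mem_erase.mpr ⟨hy.2 0, Finset.mem_univ _⟩
      · intro c hc
        simp only [Finset.mem_filter, Finset.mem_univ, true_and]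
        intro t
        exact (Finset.mem_erase.mp hc).1
      · intro y _; funext t; rw [Fin.eq_zero t]
      · intro c _; rfl
      · intro y _; simp
  | succ r ih =>
    have key : ∑ y ∈ Finset.univ.filter (fun y : Fin (r+2) → Fin k => ∀ t, y t ≠ i),
          μ (y 0) * ∏ t : Fin (r+1), M (y t.castSucc) (y t.succ)
        = ∑ zc ∈ (Finset.univ.filter (fun z : Fin (r+1) → Fin k => ∀ t, z t ≠ i)) ×ˢ
            (Finset.univ.erase i),
            (μ (zc.1 0) * ∏ t : Fin r, M (zc.1 t.castSucc) (zc.1 t.succ)) *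
              M (zc.1 (Fin.last r)) zc.2 := by
      refine Finset.sum_nbij' (fun y => (Fin.init y, y (Fin.last (r+1))))
        (fun zc => Fin.snoc zc.1 zc.2) ?_ ?_ ?_ ?_ ?_
      · intro y hy
        simp only [Finset.mem_filter, Finset.mem_univ, true_and] at hy ⊢
        refine Finset.mem_product.mpr ⟨?_, ?_⟩
        · simp only [Finset.mem_filter, Finset.mem_univ, true_and]
          intro t; exact hy _
        · exact Finset.mem_erase.mpr ⟨hy _, Finset.mem_univ _⟩
      · intro zc hzc
        simp only [Finset.mem_product, Finset.mem_filter, Finset.mem_univ, true_and,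
          Finset.mem_erase] at hzc
        simp only [Finset.mem_filter, Finset.mem_univ, true_and]
        intro t
        induction t using Fin.lastCases with
        | last => rw [Fin.snoc_last]; exact hzc.2.1
        | cast s => rw [Fin.snoc_castSucc]; exact hzc.1 s
      · intro y _; exact Fin.snoc_init_self y
      · intro zc _; simp [Fin.init_snoc, Fin.snoc_last]
      · intro y hy
        simp only
        rw [Fin.prod_univ_castSucc (fun t : Fin (r+1) => M (y t.castSucc) (y t.succ))]
        have h0 : Fin.init y 0 = y 0 := by
          rw [show (0 : Fin (r+2)) = Fin.castSucc 0 from (Fin.castSucc_zero).symm]; rfl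
        have hprod : ∀ t : Fin r,
            M (Fin.init y t.castSucc) (Fin.init y t.succ) =
              M (y t.castSucc.castSucc) (y t.castSucc.succ) := by
          intro t
          unfold Fin.init
          rw [Fin.succ_castSucc]
        rw [h0]
        rw [Finset.prod_congr rfl (fun t _ => hprod t)]
        have hlast : Fin.init y (Fin.last r) = y (Fin.last r).castSucc := rfl
        have hsucc : (Fin.last r).succ = Fin.last (r+1) := rfl
        rw [hlast, hsucc]
        ring
    rw [key, Finset.sum_product]
    have inner : ∀ z ∈ Finset.univ.filter (fun z : Fin (r+1) → Fin k => ∀ t, z t ≠ i),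
        ∑ c ∈ Finset.univ.erase i,
          (μ (z 0) * ∏ t : Fin r, M (z t.castSucc) (z t.succ)) * M (z (Fin.last r)) c
        = (μ (z 0) * ∏ t : Fin r, M (z t.castSucc) (z t.succ)) * (1 - 1 / n) := by
      intro z hz
      simp only [Finset.mem_filter] at hz
      rw [← Finset.mul_sum, hrow _ (hz.2 _)]
    rw [Finset.sum_congr rfl inner, ← Finset.sum_mul, ih]
    ring

/-- Lemma 5: exact probability of the tail blocks `K_ℓ(i)` under the chains of the
prior construction (stated for 1-indexed even states `i`, i.e. `Even (i.1 + 1)`). -/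
theorem tail_block_probability (k n : ℕ) (hk2 : 2 ≤ k) (hke : Even k) (hkn : k < n)
    (p : Fin k → ℝ) (M : Fin k → Fin k → ℝ)
    (hModd : ∀ i : Fin k, ¬ Even (i.1 + 1) →
      M i i = (1 - ((k : ℝ) - 2) / n) - 1 / n ∧ ∀ j, j ≠ i → M i j = 1 / n)
    (hMeven : ∀ i : Fin k, Even (i.1 + 1) →
      (0 < p i ∧ p i ≤ (1 - ((k : ℝ) - 2) / n) - 1 / n) ∧
      M i i = (1 - ((k : ℝ) - 2) / n) - p i ∧
      M i ⟨i.1 - 1, by have := i.2; omega⟩ = p i ∧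
      ∀ j : Fin k, j ≠ i → j.1 ≠ i.1 - 1 → M i j = 1 / n)
    (μ : Fin k → ℝ) (hμ : ∀ j, μ j = (k : ℝ)⁻¹)
    (i : Fin k) (hi : Even (i.1 + 1)) (ℓ : ℕ) (hℓ1 : 1 ≤ ℓ) (hℓn : ℓ ≤ n - 1) :
    ∑ x ∈ Finset.univ.filter (fun x : Fin n → Fin k => IsTailSeq n x i ℓ),
        seqProb n μ M x =
      (((k : ℝ) - 1) / k) * (1 - 1 / n) ^ (n - ℓ - 1) * (1 / n) *
        (1 - ((k : ℝ) - 2) / n - p i) ^ (ℓ - 1) := by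
  have hn3 : 3 ≤ n := by omega
  obtain ⟨r, hr⟩ : ∃ r, n - ℓ = r + 1 := ⟨n - ℓ - 1, by omega⟩
  have hr1 : r + 1 ≤ n - 1 := by omega
  -- the extension map
  set E : (Fin (r+1) → Fin k) → ℕ → Fin k :=
    fun y t => if h : t < r + 1 then y ⟨t, h⟩ else i with hE
  have key : ∑ x ∈ Finset.univ.filter (fun x : Fin n → Fin k => IsTailSeq n x i ℓ),
        seqProb n μ M x
      = ∑ y ∈ Finset.univ.filter (fun y : Fin (r+1) → Fin k => ∀ t, y t ≠ i),
          seqProb n μ M (fun s => E y s.1) := by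
    have hinv : ∀ x : Fin n → Fin k, IsTailSeq n x i ℓ →
        (fun s : Fin n => E (fun s' : Fin (r+1) => x ⟨s'.1, by omega⟩) s.1) = x := by
      intro x hx
      funext s
      by_cases hs : s.1 < r + 1
      · simp only [hE, dif_pos hs]
      · simp only [hE, dif_neg hs]
        exact (hx.2 s (by omega)).symm
    refine Finset.sum_nbij' (fun x => fun s : Fin (r+1) => x ⟨s.1, by omega⟩)
      (fun y => fun s : Fin n => E y s.1) ?_ ?_ ?_ ?_ ?_
    · intro x hx
      simp only [Finset.mem_filter, Finset.mem_univ, true_and] at hx ⊢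
      intro t
      exact hx.1 _ (by simp; omega)
    · intro y hy
      simp only [Finset.mem_filter, Finset.mem_univ, true_and] at hy ⊢
      constructor
      · intro s hs
        have hs' : s.1 < r + 1 := by omega
        simp only [hE, dif_pos hs']
        exact hy _
      · intro s hs
        have hs' : ¬ (s.1 < r + 1) := by omega
        simp only [hE, dif_neg hs']
    · intro x hx
      simp only [Finset.mem_filter, Finset.mem_univ, true_and] at hx
      exact hinv x hx
    · intro y _
      funext s
      have hs : s.1 < r + 1 := s.2
      simp only [hE, dif_pos hs]
    · intro x hx
      simp only [Finset.mem_filter, Finset.mem_univ, true_and] at hx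
      exact (congrArg (seqProb n μ M) (hinv x hx)).symm
  rw [key]
  -- now compute seqProb of each extended sequence
  have hMii : M i i = (1 - ((k : ℝ) - 2) / n) - p i := (hMeven i hi).2.1
  have step : ∀ y ∈ Finset.univ.filter (fun y : Fin (r+1) → Fin k => ∀ t, y t ≠ i),
      seqProb n μ M (fun s => E y s.1)
        = (μ (y 0) * ∏ t : Fin r, M (y t.castSucc) (y t.succ)) * (1 / n) *
            (1 - ((k : ℝ) - 2) / n - p i) ^ (ℓ - 1) := by
    intro y hy
    simp only [Finset.mem_filter, Finset.mem_univ, true_and] at hy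
    unfold seqProb
    rw [dif_pos (by omega : 0 < n)]
    have h0 : E y (0 : ℕ) = y 0 := by
      simp only [hE, dif_pos (by omega : (0:ℕ) < r + 1)]
      rfl
    have hbody : ∀ t : Fin (n-1),
        M (E y (t.1 : ℕ)) (E y (t.1 + 1)) = (fun u : ℕ => M (E y u) (E y (u+1))) t.1 :=
      fun _ => rfl
    rw [show (∏ t : Fin (n - 1),
        M ((fun s : Fin n => E y s.1) ⟨t.1, by have := t.2; omega⟩)
          ((fun s : Fin n => E y s.1) ⟨t.1 + 1, by have := t.2; omega⟩))
      = ∏ u ∈ Finset.range (n-1), M (E y u) (E y (u+1)) from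
        Fin.prod_univ_eq_prod_range (fun u : ℕ => M (E y u) (E y (u+1))) (n-1)]
    rw [← Finset.prod_range_mul_prod_Ico (fun u : ℕ => M (E y u) (E y (u+1))) hr1]
    rw [Finset.prod_range_succ]
    -- the Ico part
    have hIco : ∀ u ∈ Finset.Ico (r+1) (n-1),
        M (E y u) (E y (u+1)) = 1 - ((k : ℝ) - 2) / n - p i := by
      intro u hu
      rw [Finset.mem_Ico] at hu
      have h1 : ¬ (u < r + 1) := by omega
      have h2 : ¬ (u + 1 < r + 1) := by omega
      simp only [hE, dif_neg h1, dif_neg h2]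
      exact hMii
    rw [Finset.prod_congr rfl hIco, Finset.prod_const, Nat.card_Ico]
    -- the boundary factor
    have hbdy : M (E y r) (E y (r+1)) = 1 / n := by
      have h1 : r < r + 1 := by omega
      have h2 : ¬ (r + 1 < r + 1) := by omega
      simp only [hE, dif_pos h1, dif_neg h2]
      exact MjI k n hk2 p M hModd hMeven i hi _ (hy _)
    rw [hbdy]
    -- the prefix part
    have hpre : ∀ u ∈ Finset.range r,
        M (E y u) (E y (u+1))
          = (fun t : ℕ => M (E y t) (E y (t+1))) u := fun _ _ => rfl
    rw [show (∏ u ∈ Finset.range r, M (E y u) (E y (u+1)))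
        = ∏ t : Fin r, M (y t.castSucc) (y t.succ) from ?_]
    · rw [show n - 1 - (r+1) = ℓ - 1 from by omega]
      simp only [h0]
      ring
    · rw [← Fin.prod_univ_eq_prod_range (fun u : ℕ => M (E y u) (E y (u+1))) r]
      refine Finset.prod_congr rfl (fun t _ => ?_)
      have h1 : t.1 < r + 1 := by omega
      have h2 : t.1 + 1 < r + 1 := by omega
      simp only [hE, dif_pos h1, dif_pos h2]
      rfl
  rw [Finset.sum_congr rfl step, ← Finset.sum_mul, ← Finset.sum_mul]
  rw [prefixSum k n hk2 M μ hμ i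
    (fun j hj => rowSum k n hk2 hkn p M hModd hMeven i hi j hj) r]
  rw [show n - ℓ - 1 = r from by omega]
end
end

section
/- Lemma 6 (uniform hitting-probability bound): For any Markov chain over [k] started at state i (i.e., X_1 = i almost surely) with any transition matrix, any state j ∈ [k], and any integer n > k, the probability that the hitting time of j equals n satisfies Pr_i(τ(j) = n) ≤ k/n, where τ(j) = min{ t ≥ 1 : X_t = j }. -/
open Finset
open scoped Classical

noncomputable section

namespace HTB

variable {k : ℕ}

/-- `H M j m x` = probability, starting at `x`, that the first hit of `j` is at time `m+1`. -/
def H (M : Fin k → Fin k → ℝ) (j : Fin k) : ℕ → Fin k → ℝ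
  | 0, x => if x = j then 1 else 0
  | m + 1, x => if x = j then 0 else ∑ y, M x y * H M j m y

/-- path-sum form -/
def P (M : Fin k → Fin k → ℝ) (j : Fin k) (N : ℕ) (i : Fin k) : ℝ :=
  ∑ z : Fin (N + 1) → Fin k,
    if z 0 = i ∧ (∀ s : Fin (N + 1), s.1 < N → z s ≠ j) ∧ z (Fin.last N) = j then
      ∏ t : Fin N, M (z t.castSucc) (z t.succ) else 0

theorem P_eq_H (M : Fin k → Fin k → ℝ) (j : Fin k) (N : ℕ) (i : Fin k) :
    P M j N i = H M j N i := by
  induction N generalizing i with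
  | zero =>
    have h1 : P M j 0 i = ∑ w : Fin k, if w = i ∧ w = j then (1 : ℝ) else 0 := by
      rw [P]
      apply Fintype.sum_equiv (Equiv.funUnique (Fin 1) (Fin k))
      intro z
      simp [Equiv.funUnique, Fin.last]
    rw [h1, H]
    by_cases h : i = j
    · subst h; simp
    · simp only [eq_comm (a := i)]
      simp [h, Ne.symm h, fun w => show ¬(w = i ∧ w = j) from fun hw => h (hw.1 ▸ hw.2)]
  | succ N ih =>
    have key2 : P M j (N + 1) i =
        ∑ p : Fin k × (Fin (N + 1) → Fin k),
          if p.1 = i ∧ (p.1 ≠ j ∧ ∀ s : Fin (N + 1), s.1 < N → p.2 s ≠ j) ∧ p.2 (Fin.last N) = j then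
            M p.1 (p.2 0) * ∏ t : Fin N, M (p.2 t.castSucc) (p.2 t.succ) else 0 := by
      rw [P]
      apply Fintype.sum_equiv (Fin.consEquiv (fun _ => Fin k)).symm
      intro z
      have hcond : (∀ s : Fin (N + 2), s.1 < N + 1 → z s ≠ j) ↔
          (z 0 ≠ j ∧ ∀ s : Fin (N + 1), s.1 < N → (Fin.tail z) s ≠ j) := by
        constructor
        · intro h
          refine ⟨h 0 (by simp), fun s hs => ?_⟩
          exact h s.succ (by simpa using hs)
        · rintro ⟨h0, h⟩ s hs
          induction s using Fin.cases with
          | zero => exact h0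
          | succ s => exact h s (by simpa using hs)
      have hprod : (∏ t : Fin (N + 1), M (z t.castSucc) (z t.succ)) =
          M (z 0) (Fin.tail z 0) * ∏ t : Fin N, M (Fin.tail z t.castSucc) (Fin.tail z t.succ) := by
        rw [Fin.prod_univ_succ]
        simp [Fin.tail, Fin.succ_castSucc, -Fin.castSucc_succ]
      have hlast : z (Fin.last (N + 1)) = Fin.tail z (Fin.last N) := by
        simp [Fin.tail, Fin.succ_last]
      simp only [Fin.consEquiv_symm_apply]
      rw [hprod, hlast]
      by_cases h0 : z 0 = i ∧ (∀ s : Fin (N + 2), s.1 < N + 1 → z s ≠ j) ∧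
          Fin.tail z (Fin.last N) = j
      · rw [if_pos h0, if_pos]
        exact ⟨h0.1, ⟨(hcond.1 h0.2.1).1, (hcond.1 h0.2.1).2⟩, h0.2.2⟩
      · rw [if_neg h0, if_neg]
        intro ⟨h1, ⟨h2a, h2b⟩, h3⟩
        exact h0 ⟨h1, hcond.2 ⟨h1 ▸ h2a, h2b⟩, h3⟩
    have key := key2.trans (Fintype.sum_prod_type _)
    rw [key, Finset.sum_comm]
    simp only [ite_and, Finset.sum_ite_eq', Finset.mem_univ, if_true]
    rw [H]
    by_cases hij : i = j
    · simp [hij]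
    · rw [if_neg hij]
      have hP : ∀ y, H M j N y = P M j N y := fun y => (ih y).symm
      simp only [hP, P, Finset.mul_sum, mul_ite, mul_zero]
      rw [Finset.sum_comm]
      simp only [ite_and, Finset.sum_ite_eq, Finset.mem_univ, if_true]
      apply Finset.sum_congr rfl
      intro z _
      simp [hij]

theorem H_nonneg {M : Fin k → Fin k → ℝ} (hM : IsTransMat M) (j : Fin k) (m : ℕ) (x : Fin k) :
    0 ≤ H M j m x := by
  induction m generalizing x with
  | zero => rw [H]; positivity
  | succ m ih =>
    rw [H]
    split
    · exact le_refl 0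
    · exact Finset.sum_nonneg fun y _ => mul_nonneg ((hM x).1 y) (ih y)

theorem H_le {M : Fin k → Fin k → ℝ} (hM : IsTransMat M) (j : Fin k) (m : ℕ) (x : Fin k)
    {c : ℝ} (hc : 0 ≤ c) (h : ∀ y, H M j m y ≤ c) : H M j (m + 1) x ≤ c := by
  rw [H]
  split
  · exact hc
  · calc ∑ y, M x y * H M j m y ≤ ∑ y, M x y * c :=
          Finset.sum_le_sum fun y _ => mul_le_mul_of_nonneg_left (h y) ((hM x).1 y)
    _ = c := by rw [← Finset.sum_mul, (hM x).2, one_mul]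

theorem sum_H_le_one {M : Fin k → Fin k → ℝ} (hM : IsTransMat M) (j : Fin k) (N : ℕ)
    (x : Fin k) : ∑ m ∈ Finset.range (N + 1), H M j m x ≤ 1 := by
  induction N generalizing x with
  | zero =>
    rw [show (0:ℕ)+1 = 1 from rfl, Finset.range_one, Finset.sum_singleton, H]
    split <;> norm_num
  | succ N ih =>
    rw [Finset.sum_range_succ']
    by_cases hx : x = j
    · have hz : ∀ m, H M j (m + 1) x = 0 := by intro m; rw [H, if_pos hx]
      rw [Finset.sum_eq_zero (fun m _ => hz m), zero_add, H, if_pos hx]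
    · have h0 : H M j 0 x = 0 := by rw [H, if_neg hx]
      rw [h0, add_zero]
      have hstep : ∀ m, H M j (m + 1) x = ∑ y, M x y * H M j m y := by
        intro m; rw [H, if_neg hx]
      calc ∑ m ∈ Finset.range (N + 1), H M j (m + 1) x
          = ∑ y, M x y * ∑ m ∈ Finset.range (N + 1), H M j m y := by
            simp only [hstep]
            rw [Finset.sum_comm]
            simp [Finset.mul_sum]
        _ ≤ ∑ y, M x y * 1 :=
            Finset.sum_le_sum fun y _ => mul_le_mul_of_nonneg_left (ih y) ((hM x).1 y)
        _ = 1 := by simp [(hM x).2]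

theorem H_bound (hk : 0 < k) {M : Fin k → Fin k → ℝ} (hM : IsTransMat M) (j : Fin k) (N : ℕ)
    (i : Fin k) : H M j N i ≤ (k : ℝ) / (N + 1) := by
  have hne : (Finset.univ : Finset (Fin k)).Nonempty := by
    have : Nonempty (Fin k) := ⟨⟨0, hk⟩⟩
    exact Finset.univ_nonempty
  set B : ℕ → ℝ := fun m => Finset.univ.sup' hne (H M j m) with hB
  have hBnn : ∀ m, 0 ≤ B m := fun m =>
    le_trans (H_nonneg hM j m hne.choose) (Finset.le_sup' _ (Finset.mem_univ _))
  have hBle : ∀ m x, H M j m x ≤ B m := fun m x => Finset.le_sup' _ (Finset.mem_univ x)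
  have hmono : ∀ m, B (m + 1) ≤ B m := by
    intro m
    apply Finset.sup'_le
    intro x _
    exact H_le hM j m x (hBnn m) (hBle m)
  have hmono' : ∀ m, m ≤ N → B N ≤ B m := by
    intro m hm
    induction N with
    | zero => interval_cases m; exact le_refl _
    | succ N ihN =>
      rcases Nat.lt_or_ge m (N + 1) with h | h
      · exact le_trans (hmono N) (ihN (by omega))
      · have : m = N + 1 := by omega
        subst this; exact le_refl _
  have hBsum : ∀ m, B m ≤ ∑ x, H M j m x := by
    intro m
    apply Finset.sup'_le
    intro x _
    exact Finset.single_le_sum (fun y _ => H_nonneg hM j m y) (Finset.mem_univ x)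
  have htot : (N + 1 : ℝ) * B N ≤ k := by
    calc (N + 1 : ℝ) * B N = ∑ m ∈ Finset.range (N + 1), B N := by
          rw [Finset.sum_const, Finset.card_range, nsmul_eq_mul]; push_cast; ring
      _ ≤ ∑ m ∈ Finset.range (N + 1), B m :=
          Finset.sum_le_sum fun m hm => hmono' m (by simpa using Nat.lt_succ_iff.mp (Finset.mem_range.mp hm))
      _ ≤ ∑ m ∈ Finset.range (N + 1), ∑ x, H M j m x :=
          Finset.sum_le_sum fun m _ => hBsum m
      _ = ∑ x, ∑ m ∈ Finset.range (N + 1), H M j m x := Finset.sum_comm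
      _ ≤ ∑ _x : Fin k, (1 : ℝ) :=
          Finset.sum_le_sum fun x _ => sum_H_le_one hM j N x
      _ = k := by simp
  have hpos : (0 : ℝ) < N + 1 := by positivity
  calc H M j N i ≤ B N := hBle N i
    _ ≤ (k : ℝ) / (N + 1) := by
        rw [le_div_iff₀ hpos]
        linarith [htot]

end HTB

/-- Lemma 6: for a Markov chain started at state `i`, the probability that the
hitting time of state `j` equals `n` is at most `k / n` whenever `n > k`. -/
theorem hitting_time_bound (k n : ℕ) (hk : 0 < k) (hkn : k < n)
    (M : Fin k → Fin k → ℝ) (hM : IsTransMat M) (i j : Fin k) :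
    ∑ x ∈ Finset.univ.filter (fun x : Fin n → Fin k =>
        x ⟨0, by omega⟩ = i ∧ (∀ s : Fin n, s.1 < n - 1 → x s ≠ j) ∧
          x ⟨n - 1, by omega⟩ = j),
      ∏ t : Fin (n - 1),
        M (x ⟨t.1, by have := t.2; omega⟩) (x ⟨t.1 + 1, by have := t.2; omega⟩)
      ≤ (k : ℝ) / n := by
  obtain ⟨N, rfl⟩ : ∃ N, n = N + 1 := ⟨n - 1, by omega⟩
  have hEq : (∑ x ∈ Finset.univ.filter (fun x : Fin (N + 1) → Fin k =>
        x ⟨0, by omega⟩ = i ∧ (∀ s : Fin (N + 1), s.1 < N + 1 - 1 → x s ≠ j) ∧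
          x ⟨N + 1 - 1, by omega⟩ = j),
      ∏ t : Fin (N + 1 - 1),
        M (x ⟨t.1, by have := t.2; omega⟩) (x ⟨t.1 + 1, by have := t.2; omega⟩))
      = HTB.P M j N i := by
    rw [HTB.P, Finset.sum_filter]
    apply Finset.sum_congr rfl
    intro z _
    congr 1
  rw [hEq, HTB.P_eq_H]
  have := HTB.H_bound hk hM j N i
  convert this using 2
  push_cast
  ring
end
end

section
/- Lemma 14 (f-divergence decreases when moving two coordinates closer): Let f:(0,∞)→ℝ be convex with f(1)=0. Let p_1, p_2, q_1, q_2 > 0 with p_1 > q_1 and p_2 < q_2, and let 0 ≤ d ≤ min{ p_1 − q_1, q_2 − p_2 }. Then q_1·f(p_1/q_1) + q_2·f(p_2/q_2) ≥ (q_1 + d)·f(p_1/(q_1+d)) + (q_2 − d)·f(p_2/(q_2−d)). -/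
private lemma chord_aux (f : ℝ → ℝ) (hconv : ConvexOn ℝ (Set.Ioi 0) f) (hf1 : f 1 = 0)
    {p a b : ℝ} (ha : 0 < a) (hab : a ≤ b) (hbp : b ≤ p) (hap : a < p) :
    b * f (p / b) ≤ ((p - b) / (p - a)) * (a * f (p / a)) := by
  have hb : 0 < b := lt_of_lt_of_le ha hab
  have hp : 0 < p := lt_of_lt_of_le hb hbp
  have hpa : 0 < p - a := by linarith
  set t : ℝ := a * (p - b) / (b * (p - a)) with ht
  have ht0 : 0 ≤ t :=
    div_nonneg (mul_nonneg ha.le (by linarith)) (mul_nonneg hb.le hpa.le)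
  have ht1 : t ≤ 1 := by
    rw [div_le_one (by positivity)]
    nlinarith
  have key := hconv.2 (show p / a ∈ Set.Ioi 0 from Set.mem_Ioi.2 (div_pos hp ha))
    (show (1 : ℝ) ∈ Set.Ioi 0 from Set.mem_Ioi.2 one_pos) ht0 (by linarith : (0:ℝ) ≤ 1 - t)
    (by ring)
  simp only [smul_eq_mul] at key
  have heq : t * (p / a) + (1 - t) * 1 = p / b := by
    rw [ht]
    field_simp
    ring
  rw [heq, hf1, mul_zero, add_zero] at key
  calc b * f (p / b) ≤ b * (t * f (p / a)) := mul_le_mul_of_nonneg_left key hb.le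
    _ = ((p - b) / (p - a)) * (a * f (p / a)) := by
        rw [ht]
        field_simp

private lemma chord_aux2 (f : ℝ → ℝ) (hconv : ConvexOn ℝ (Set.Ioi 0) f) (hf1 : f 1 = 0)
    {p a b : ℝ} (hp : 0 < p) (hpa : p ≤ a) (hab : a ≤ b) (hpb : p < b) :
    a * f (p / a) ≤ ((a - p) / (b - p)) * (b * f (p / b)) := by
  have ha : 0 < a := lt_of_lt_of_le hp hpa
  have hb : 0 < b := lt_of_lt_of_le ha hab
  have hbp : 0 < b - p := by linarith
  set t : ℝ := b * (a - p) / (a * (b - p)) with ht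
  have ht0 : 0 ≤ t :=
    div_nonneg (mul_nonneg hb.le (by linarith)) (mul_nonneg ha.le hbp.le)
  have ht1 : t ≤ 1 := by
    rw [div_le_one (by positivity)]
    nlinarith
  have key := hconv.2 (show p / b ∈ Set.Ioi 0 from Set.mem_Ioi.2 (div_pos hp hb))
    (show (1 : ℝ) ∈ Set.Ioi 0 from Set.mem_Ioi.2 one_pos) ht0 (by linarith : (0:ℝ) ≤ 1 - t)
    (by ring)
  simp only [smul_eq_mul] at key
  have heq : t * (p / b) + (1 - t) * 1 = p / a := by
    rw [ht]
    field_simp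
    ring
  rw [heq, hf1, mul_zero, add_zero] at key
  calc a * f (p / a) ≤ a * (t * f (p / b)) := mul_le_mul_of_nonneg_left key ha.le
    _ = ((a - p) / (b - p)) * (b * f (p / b)) := by
        rw [ht]
        field_simp

/-- Lemma 14: moving the second argument of an `f`-divergence term closer to the
first (in two coordinates) does not increase the sum of the two terms. -/
theorem fdiv_two_coordinate_monotone (f : ℝ → ℝ)
    (hconv : ConvexOn ℝ (Set.Ioi 0) f) (hf1 : f 1 = 0)
    (p1 p2 q1 q2 d : ℝ) (hp1 : 0 < p1) (hp2 : 0 < p2) (hq1 : 0 < q1) (hq2 : 0 < q2)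
    (h1 : q1 < p1) (h2 : p2 < q2) (hd0 : 0 ≤ d)
    (hd : d ≤ min (p1 - q1) (q2 - p2)) :
    (q1 + d) * f (p1 / (q1 + d)) + (q2 - d) * f (p2 / (q2 - d)) ≤
      q1 * f (p1 / q1) + q2 * f (p2 / q2) := by
  have hd1 : d ≤ p1 - q1 := le_trans hd (min_le_left _ _)
  have hd2 : d ≤ q2 - p2 := le_trans hd (min_le_right _ _)
  set A : ℝ := q1 * f (p1 / q1) with hA
  set B : ℝ := q2 * f (p2 / q2) with hB
  -- chord bounds for each term
  have hb1 : (q1 + d) * f (p1 / (q1 + d)) ≤ ((p1 - (q1 + d)) / (p1 - q1)) * A :=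
    chord_aux f hconv hf1 hq1 (by linarith) (by linarith) h1
  have hb2 : (q2 - d) * f (p2 / (q2 - d)) ≤ (((q2 - d) - p2) / (q2 - p2)) * B :=
    chord_aux2 f hconv hf1 hp2 (by linarith) (by linarith) h2
  -- slope inequality at the points p2/q2 < 1 < p1/q1
  have hx1 : (1 : ℝ) < p1 / q1 := (one_lt_div hq1).2 h1
  have hx2 : p2 / q2 < 1 := (div_lt_one hq2).2 h2
  have hx2pos : 0 < p2 / q2 := div_pos hp2 hq2
  have hslope := hconv.slope_mono_adjacent (Set.mem_Ioi.2 hx2pos)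
    (Set.mem_Ioi.2 (lt_trans one_pos hx1)) hx2 hx1
  rw [hf1] at hslope
  -- clear denominators in the slope inequality
  have key : 0 ≤ A * (q2 - p2) + B * (p1 - q1) := by
    rw [div_le_div_iff₀ (by linarith) (by linarith)] at hslope
    have e1 : A * (q2 - p2) = q1 * q2 * (f (p2 / q2) * (p1 / q1 - 1)) +
        (q1 * q2 * ((0 - f (p2 / q2)) * (p1 / q1 - 1)) + A * (q2 - p2)) := by ring
    have h3 : q1 * q2 * ((0 - f (p2 / q2)) * (p1 / q1 - 1)) ≤
        q1 * q2 * ((f (p1 / q1) - 0) * (1 - p2 / q2)) :=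
      mul_le_mul_of_nonneg_left hslope (by positivity)
    have e2 : q1 * q2 * ((f (p1 / q1) - 0) * (1 - p2 / q2)) = A * (q2 - p2) := by
      field_simp [hA]
      ring
    have e3 : q1 * q2 * ((0 - f (p2 / q2)) * (p1 / q1 - 1)) = -(B * (p1 - q1)) := by
      field_simp [hB]
      ring
    rw [e2, e3] at h3
    linarith
  have hsum : 0 ≤ d * A / (p1 - q1) + d * B / (q2 - p2) := by
    have h1' : (0:ℝ) < p1 - q1 := by linarith
    have h2' : (0:ℝ) < q2 - p2 := by linarith
    have e : d * A / (p1 - q1) + d * B / (q2 - p2) =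
        d * (A * (q2 - p2) + B * (p1 - q1)) / ((p1 - q1) * (q2 - p2)) := by
      field_simp
    rw [e]
    exact div_nonneg (mul_nonneg hd0 key) (mul_nonneg h1'.le h2'.le)
  have hl1 : ((p1 - (q1 + d)) / (p1 - q1)) * A = A - d * A / (p1 - q1) := by
    have h : p1 - q1 ≠ 0 := sub_ne_zero_of_ne h1.ne'
    field_simp [h]
    ring
  have hl2 : (((q2 - d) - p2) / (q2 - p2)) * B = B - d * B / (q2 - p2) := by
    have h : q2 - p2 ≠ 0 := sub_ne_zero_of_ne h2.ne'
    field_simp [h]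
    ring
  calc (q1 + d) * f (p1 / (q1 + d)) + (q2 - d) * f (p2 / (q2 - d))
      ≤ ((p1 - (q1 + d)) / (p1 - q1)) * A + (((q2 - d) - p2) / (q2 - p2)) * B :=
        add_le_add hb1 hb2
    _ = (A + B) - (d * A / (p1 - q1) + d * B / (q2 - p2)) := by rw [hl1, hl2]; ring
    _ ≤ A + B := by linarith
end

section
/- Lemma 17 (concentration of state-occupation counts): Let δ ∈ (0,1/k) and let (μ,M) ∈ 𝕄^k_δ with stationary distribution π. Let X^n be drawn from this chain and N_i = |{ t ∈ {1,…,n−1} : X_t = i }|. Define C(δ) = ⌈ −ln 4 / ln(1−δ) + 1 ⌉. Then for every i ∈ [k] and every t ≥ 0: Pr( |N_i − (n−1)·π_i| > t ) ≤ √(2/δ) · exp( −(t²/C(δ)) / ( 4·((n−1) + 2·C(δ)) + 40·t ) ). -/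
open Filter Finset
open scoped ENNReal Classical

noncomputable section

def IsStationaryVec {k : ℕ} (M : Fin k → Fin k → ℝ) (pi : Fin k → ℝ) : Prop :=
  IsProbVec pi ∧ ∀ j, ∑ i, pi i * M i j = pi j

/-- `N_i`: the number of (1-indexed) times `t ∈ {1, …, n-1}` with `x_t = i`. -/
def countState {k n : ℕ} (x : Fin n → Fin k) (i : Fin k) : ℕ :=
  (Finset.univ.filter (fun s : Fin n => s.1 < n - 1 ∧ x s = i)).card

/-- `C(δ) = ⌈ -ln 4 / ln (1-δ) + 1 ⌉`. -/
def Cdelta (δ : ℝ) : ℝ :=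
  ((⌈-Real.log 4 / Real.log (1 - δ) + 1⌉ : ℤ) : ℝ)

set_option maxHeartbeats 1600000

/- helper machinery for Lemma 17 -/
namespace L17

variable {k : ℕ}

lemma exp_quad {y : ℝ} (hy : |y| ≤ 1/18) : Real.exp y ≤ 1 + y + (53/50)*y^2 := by
  have h1 : (-y) + 1 ≤ Real.exp (-y) := Real.add_one_le_exp _
  have h2 : Real.exp y * Real.exp (-y) = 1 := by
    rw [← Real.exp_add]; simp
  have hy1 : y ≤ 1/18 := (abs_le.1 hy).2
  have hy2 : -(1/18) ≤ y := (abs_le.1 hy).1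
  have hpos : (0:ℝ) < Real.exp y := Real.exp_pos y
  nlinarith [sq_nonneg y, mul_pos hpos (Real.exp_pos (-y))]

lemma exp_sub_one_abs {y : ℝ} (hy : |y| ≤ 1/18) : |Real.exp y - 1| ≤ (53/50)*|y| := by
  have h1 := exp_quad hy
  have h2 : y + 1 ≤ Real.exp y := Real.add_one_le_exp _
  have hy1 : y ≤ 1/18 := (abs_le.1 hy).2
  have hy2 : -(1/18) ≤ y := (abs_le.1 hy).1
  rw [abs_le]
  constructor
  · rcases abs_cases y with ⟨h, _⟩ | ⟨h, _⟩ <;> nlinarith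
  · rcases abs_cases y with ⟨h, _⟩ | ⟨h, _⟩ <;> nlinarith

variable {k : ℕ}

def Nrm (p g : Fin k → ℝ) : ℝ := Real.sqrt (∑ x, (g x)^2 / p x)

def Emb (p g : Fin k → ℝ) : EuclideanSpace ℝ (Fin k) := WithLp.toLp 2 (fun x => g x / Real.sqrt (p x))

def Emb2 (p h : Fin k → ℝ) : EuclideanSpace ℝ (Fin k) := WithLp.toLp 2 (fun x => h x * Real.sqrt (p x))

lemma nrm_eq_norm (p g : Fin k → ℝ) (hp : ∀ x, 0 ≤ p x) : Nrm p g = ‖Emb p g‖ := by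
  rw [EuclideanSpace.norm_eq, Nrm]
  congr 1
  apply Finset.sum_congr rfl
  intro x _
  rw [Real.norm_eq_abs, sq_abs]
  show (g x)^2 / p x = (g x / Real.sqrt (p x))^2
  rw [div_pow, Real.sq_sqrt (hp x)]

lemma nrm_nonneg (p g : Fin k → ℝ) : 0 ≤ Nrm p g := Real.sqrt_nonneg _

lemma nrm_p_eq_one (p : Fin k → ℝ) (hp : ∀ x, 0 < p x) (hs : ∑ x, p x = 1) :
    Nrm p p = 1 := by
  have h : ∑ x, (p x)^2 / p x = 1 := by
    rw [← hs]
    apply Finset.sum_congr rfl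
    intro x _
    rw [sq, mul_div_assoc, div_self (ne_of_gt (hp x)), mul_one]
  rw [Nrm, h, Real.sqrt_one]

lemma emb2_norm (p h : Fin k → ℝ) (hp : ∀ x, 0 ≤ p x) :
    ‖Emb2 p h‖ = Real.sqrt (∑ x, p x * (h x)^2) := by
  rw [EuclideanSpace.norm_eq]
  congr 1
  apply Finset.sum_congr rfl
  intro x _
  rw [Real.norm_eq_abs, sq_abs]
  show (h x * Real.sqrt (p x))^2 = p x * (h x)^2
  rw [mul_pow, Real.sq_sqrt (hp x)]
  ring

lemma pair_le (p g h : Fin k → ℝ) (hp : ∀ x, 0 < p x) :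
    |∑ x, g x * h x| ≤ Nrm p g * Real.sqrt (∑ x, p x * (h x)^2) := by
  have key : ∑ x, g x * h x = @inner ℝ _ _ (Emb p g) (Emb2 p h) := by
    rw [PiLp.inner_apply]
    apply Finset.sum_congr rfl
    intro x _
    have hne : Real.sqrt (p x) ≠ 0 := ne_of_gt (Real.sqrt_pos.2 (hp x))
    simp only [RCLike.inner_apply, conj_trivial, Emb, Emb2]
    field_simp
  rw [key]
  calc |@inner ℝ _ _ (Emb p g) (Emb2 p h)| ≤ ‖Emb p g‖ * ‖Emb2 p h‖ := abs_real_inner_le_norm _ _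
    _ = Nrm p g * Real.sqrt (∑ x, p x * (h x)^2) := by
        rw [nrm_eq_norm p g (fun x => (hp x).le), emb2_norm p h (fun x => (hp x).le)]

lemma nrm_mul_le (p g E : Fin k → ℝ) (B : ℝ) (hB : 0 ≤ B) (hE : ∀ x, |E x| ≤ B)
    (hp : ∀ x, 0 < p x) :
    Nrm p (fun x => g x * E x) ≤ B * Nrm p g := by
  rw [Nrm, Nrm, ← Real.sqrt_sq hB, ← Real.sqrt_mul (sq_nonneg B)]
  apply Real.sqrt_le_sqrt
  rw [Finset.mul_sum]
  apply Finset.sum_le_sum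
  intro x _
  have h1 : (g x * E x)^2 ≤ B^2 * (g x)^2 := by
    nlinarith [sq_abs (E x), hE x, abs_nonneg (E x), sq_nonneg (g x),
      mul_le_mul_of_nonneg_left (mul_self_le_mul_self (abs_nonneg (E x)) (hE x)) (sq_nonneg (g x))]
  calc (g x * E x)^2 / p x ≤ (B^2 * (g x)^2) / p x := by
        exact div_le_div_of_nonneg_right h1 (hp x).le
    _ = B^2 * ((g x)^2 / p x) := by ring


def pathW (M : Fin k → Fin k → ℝ) (N : ℕ) (x : Fin N → Fin k) : ℝ :=
  ∏ t : Fin (N - 1),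
      M (x ⟨t.1, by have := t.2; omega⟩) (x ⟨t.1 + 1, by have := t.2; omega⟩)

def DsumF (f : Fin k → ℝ) (N : ℕ) (x : Fin N → Fin k) : ℝ :=
  ∑ s : Fin (N - 1), f (x ⟨s.1, by have := s.2; omega⟩)

lemma seqProb_eq (n : ℕ) (hn : 0 < n) (μ : Fin k → ℝ) (M : Fin k → Fin k → ℝ)
    (x : Fin n → Fin k) : seqProb n μ M x = μ (x ⟨0, hn⟩) * pathW M n x := by
  rw [seqProb, dif_pos hn]; rfl

lemma cons_mk_succ (n : ℕ) (y : Fin k) (x' : Fin (n+1) → Fin k) (j : ℕ) (h : j + 1 < n + 2) :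
    (Fin.cons y x' : Fin (n+2) → Fin k) ⟨j+1, h⟩ = x' ⟨j, by omega⟩ := by
  have : (⟨j+1, h⟩ : Fin (n+2)) = Fin.succ ⟨j, by omega⟩ := rfl
  rw [this, Fin.cons_succ]

lemma pathW_cons (M : Fin k → Fin k → ℝ) (m : ℕ) (y : Fin k) (x' : Fin (m+1) → Fin k) :
    pathW M (m+2) (Fin.cons y x') = M y (x' 0) * pathW M (m+1) x' := by
  show (∏ t : Fin (m+1), M ((Fin.cons y x' : Fin (m+2) → Fin k) ⟨t.1, by have := t.2; omega⟩)
      ((Fin.cons y x' : Fin (m+2) → Fin k) ⟨t.1 + 1, by have := t.2; omega⟩)) = _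
  rw [Fin.prod_univ_succ]
  congr 1

lemma DsumF_cons (f : Fin k → ℝ) (m : ℕ) (y : Fin k) (x' : Fin (m+1) → Fin k) :
    DsumF f (m+2) (Fin.cons y x') = f y + DsumF f (m+1) x' := by
  show (∑ s : Fin (m+1), f ((Fin.cons y x' : Fin (m+2) → Fin k) ⟨s.1, by have := s.2; omega⟩)) = _
  rw [Fin.sum_univ_succ]
  congr 1

def Tstep (M : Fin k → Fin k → ℝ) (f : Fin k → ℝ) (l : ℝ) (ν : Fin k → ℝ) : Fin k → ℝ :=
  fun z => ∑ x, ν x * Real.exp (l * f x) * M x z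

lemma pathsum_eq (M : Fin k → Fin k → ℝ) (f : Fin k → ℝ) (l : ℝ) :
    ∀ n : ℕ, 1 ≤ n → ∀ μ : Fin k → ℝ,
    ∑ x : Fin n → Fin k, seqProb n μ M x * Real.exp (l * DsumF f n x)
      = ∑ z, (Tstep M f l)^[n-1] μ z := by
  intro n hn
  induction n, hn using Nat.le_induction with
  | base =>
      intro μ
      rw [Fintype.sum_equiv (Equiv.funUnique (Fin 1) (Fin k))
        (fun x : Fin 1 → Fin k => seqProb 1 μ M x * Real.exp (l * DsumF f 1 x))
        (fun z => μ z)]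
      · simp
      · intro x
        have h1 : seqProb 1 μ M x = μ (x 0) := by
          rw [seqProb_eq 1 one_pos]
          show μ (x 0) * (∏ t : Fin 0, _) = μ (x 0)
          simp
        have h2 : DsumF f 1 x = 0 := by
          show (∑ s : Fin 0, _) = (0:ℝ)
          simp
        rw [h1, h2, mul_zero, Real.exp_zero, mul_one]
        rfl
  | succ n hn IH =>
      intro μ
      obtain ⟨m, rfl⟩ : ∃ m, n = m + 1 := ⟨n - 1, by omega⟩
      have hsplit : ∑ x : Fin (m+2) → Fin k, seqProb (m+2) μ M x * Real.exp (l * DsumF f (m+2) x)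
          = ∑ y : Fin k, ∑ x' : Fin (m+1) → Fin k,
              seqProb (m+2) μ M (Fin.cons y x') * Real.exp (l * DsumF f (m+2) (Fin.cons y x')) := by
        calc ∑ x : Fin (m+2) → Fin k, seqProb (m+2) μ M x * Real.exp (l * DsumF f (m+2) x)
            = ∑ q : Fin k × (Fin (m+1) → Fin k),
                seqProb (m+2) μ M (Fin.cons q.1 q.2) * Real.exp (l * DsumF f (m+2) (Fin.cons q.1 q.2)) :=
              (Fintype.sum_equiv (Fin.consEquiv (fun _ => Fin k))
                (fun q : Fin k × (Fin (m+1) → Fin k) =>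
                  seqProb (m+2) μ M (Fin.cons q.1 q.2) * Real.exp (l * DsumF f (m+2) (Fin.cons q.1 q.2)))
                (fun x => seqProb (m+2) μ M x * Real.exp (l * DsumF f (m+2) x))
                (fun q => rfl)).symm
          _ = _ := Fintype.sum_prod_type _
      rw [hsplit]
      have hterm : ∀ (y : Fin k) (x' : Fin (m+1) → Fin k),
          seqProb (m+2) μ M (Fin.cons y x') * Real.exp (l * DsumF f (m+2) (Fin.cons y x'))
          = (μ y * Real.exp (l * f y) * M y (x' 0)) *
            (pathW M (m+1) x' * Real.exp (l * DsumF f (m+1) x')) := by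
        intro y x'
        rw [seqProb_eq _ (by omega), pathW_cons, DsumF_cons, mul_add, Real.exp_add]
        have : (Fin.cons y x' : Fin (m+2) → Fin k) ⟨0, by omega⟩ = y := Fin.cons_zero _ _
        rw [this]
        ring
      calc ∑ y : Fin k, ∑ x' : Fin (m+1) → Fin k,
              seqProb (m+2) μ M (Fin.cons y x') * Real.exp (l * DsumF f (m+2) (Fin.cons y x'))
          = ∑ x' : Fin (m+1) → Fin k, (∑ y, μ y * Real.exp (l * f y) * M y (x' 0)) *
              (pathW M (m+1) x' * Real.exp (l * DsumF f (m+1) x')) := by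
            rw [Finset.sum_comm]
            apply Finset.sum_congr rfl
            intro x' _
            rw [Finset.sum_mul]
            exact Finset.sum_congr rfl (fun y _ => hterm y x')
        _ = ∑ x' : Fin (m+1) → Fin k,
              seqProb (m+1) (Tstep M f l μ) M x' * Real.exp (l * DsumF f (m+1) x') := by
            apply Finset.sum_congr rfl
            intro x' _
            rw [seqProb_eq _ (by omega)]
            show (∑ y, μ y * Real.exp (l * f y) * M y (x' 0)) * _ = Tstep M f l μ (x' ⟨0, _⟩) * _ * _
            rw [mul_assoc]
            rfl
        _ = ∑ z, (Tstep M f l)^[m] (Tstep M f l μ) z := IH (Tstep M f l μ)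
        _ = ∑ z, (Tstep M f l)^[m+1] μ z := by
            apply Finset.sum_congr rfl
            intro z _
            rw [Function.iterate_succ_apply]

lemma sum_seqProb (M : Fin k → Fin k → ℝ) (hM : IsTransMat M) (n : ℕ) (hn : 1 ≤ n)
    (μ : Fin k → ℝ) (hμ : IsProbVec μ) :
    ∑ x : Fin n → Fin k, seqProb n μ M x = 1 := by
  have h0 : ∀ x : Fin n → Fin k, seqProb n μ M x
      = seqProb n μ M x * Real.exp ((0:ℝ) * DsumF (fun _ => (0:ℝ)) n x) := by
    intro x; rw [zero_mul, Real.exp_zero, mul_one]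
  rw [Finset.sum_congr rfl (fun x _ => h0 x), pathsum_eq M (fun _ => 0) 0 n hn μ]
  have key : ∀ (j : ℕ) (ν : Fin k → ℝ), ∑ z, (Tstep M (fun _ => 0) 0)^[j] ν z = ∑ z, ν z := by
    intro j
    induction j with
    | zero => intro ν; rfl
    | succ j IHj =>
        intro ν
        have : ∑ z, (Tstep M (fun _ => 0) 0)^[j+1] ν z
            = ∑ z, (Tstep M (fun _ => 0) 0)^[j] (Tstep M (fun _ => 0) 0 ν) z := by
          apply Finset.sum_congr rfl; intro z _; rw [Function.iterate_succ_apply]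
        rw [this, IHj]
        show ∑ z, ∑ x, ν x * Real.exp (0 * 0) * M x z = ∑ z, ν z
        rw [Finset.sum_comm]
        apply Finset.sum_congr rfl
        intro x _
        rw [zero_mul, Real.exp_zero, mul_one, ← Finset.mul_sum, (hM x).2, mul_one]
  rw [key, hμ.2]

lemma seqProb_nonneg (M : Fin k → Fin k → ℝ) (hM : IsTransMat M) (n : ℕ)
    (μ : Fin k → ℝ) (hμ : ∀ x, 0 ≤ μ x) (x : Fin n → Fin k) : 0 ≤ seqProb n μ M x := by
  rw [seqProb]
  apply mul_nonneg
  · split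
    · exact hμ _
    · exact zero_le_one
  · exact Finset.prod_nonneg (fun t _ => (hM _).1 _)

lemma chernoff (M : Fin k → Fin k → ℝ) (hM : IsTransMat M) (f : Fin k → ℝ) (n : ℕ)
    (μ : Fin k → ℝ) (hμ : ∀ x, 0 ≤ μ x) (l t : ℝ) (hl : 0 ≤ l) :
    ∑ x ∈ Finset.univ.filter (fun x : Fin n → Fin k => t < DsumF f n x), seqProb n μ M x
      ≤ Real.exp (-(l*t)) * ∑ x : Fin n → Fin k, seqProb n μ M x * Real.exp (l * DsumF f n x) := by
  rw [Finset.mul_sum]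
  calc ∑ x ∈ Finset.univ.filter (fun x : Fin n → Fin k => t < DsumF f n x), seqProb n μ M x
      ≤ ∑ x ∈ Finset.univ.filter (fun x : Fin n → Fin k => t < DsumF f n x),
          Real.exp (-(l*t)) * (seqProb n μ M x * Real.exp (l * DsumF f n x)) := by
        apply Finset.sum_le_sum
        intro x hx
        have hx' : t < DsumF f n x := (Finset.mem_filter.1 hx).2
        have h1 : (1:ℝ) ≤ Real.exp (-(l*t)) * Real.exp (l * DsumF f n x) := by
          rw [← Real.exp_add]
          have : 0 ≤ -(l*t) + l * DsumF f n x := by nlinarith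
          calc (1:ℝ) = Real.exp 0 := (Real.exp_zero).symm
            _ ≤ _ := Real.exp_le_exp.2 this
        calc seqProb n μ M x = seqProb n μ M x * 1 := (mul_one _).symm
          _ ≤ seqProb n μ M x * (Real.exp (-(l*t)) * Real.exp (l * DsumF f n x)) := by
              apply mul_le_mul_of_nonneg_left h1 (seqProb_nonneg M hM n μ hμ x)
          _ = Real.exp (-(l*t)) * (seqProb n μ M x * Real.exp (l * DsumF f n x)) := by ring
    _ ≤ ∑ x : Fin n → Fin k, Real.exp (-(l*t)) * (seqProb n μ M x * Real.exp (l * DsumF f n x)) := by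
        apply Finset.sum_le_sum_of_subset_of_nonneg (Finset.filter_subset _ _)
        intro x _ _
        have := seqProb_nonneg M hM n μ hμ x
        positivity


lemma nrm_smul (p g : Fin k → ℝ) (c : ℝ) (hp : ∀ x, 0 ≤ p x) :
    Nrm p (fun x => c * g x) = |c| * Nrm p g := by
  rw [nrm_eq_norm _ _ hp, nrm_eq_norm _ _ hp]
  have h : Emb p (fun x => c * g x) = c • Emb p g := by
    ext x
    show c * g x / Real.sqrt (p x) = c * (g x / Real.sqrt (p x))
    rw [mul_div_assoc]
  rw [h, norm_smul, Real.norm_eq_abs]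

lemma nrm_add2 (p A B : Fin k → ℝ) (hp : ∀ x, 0 ≤ p x) :
    Nrm p (fun x => A x + B x) ≤ Nrm p A + Nrm p B := by
  rw [nrm_eq_norm _ _ hp, nrm_eq_norm _ _ hp, nrm_eq_norm _ _ hp]
  have h : Emb p (fun x => A x + B x) = Emb p A + Emb p B := by
    ext x
    show (A x + B x) / Real.sqrt (p x) = A x / Real.sqrt (p x) + B x / Real.sqrt (p x)
    rw [add_div]
  rw [h]
  exact norm_add_le _ _

lemma nrm_add3 (p A B C : Fin k → ℝ) (hp : ∀ x, 0 ≤ p x) :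
    Nrm p (fun x => A x + B x + C x) ≤ Nrm p A + Nrm p B + Nrm p C := by
  rw [nrm_eq_norm _ _ hp, nrm_eq_norm _ _ hp, nrm_eq_norm _ _ hp, nrm_eq_norm _ _ hp]
  have h : Emb p (fun x => A x + B x + C x) = Emb p A + Emb p B + Emb p C := by
    ext x
    show (A x + B x + C x) / Real.sqrt (p x) = A x / Real.sqrt (p x) + B x / Real.sqrt (p x)
      + C x / Real.sqrt (p x)
    rw [add_div, add_div]
  rw [h]
  exact norm_add₃_le


lemma p_ge (δ : ℝ) (M : Fin k → Fin k → ℝ) (p : Fin k → ℝ)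
    (hδM : ∀ i j, δ ≤ M i j) (hp : IsProbVec p)
    (hpst : ∀ j, ∑ x, p x * M x j = p j) : ∀ y, δ ≤ p y := by
  intro y
  rw [← hpst y]
  calc δ = ∑ x, p x * δ := by rw [← Finset.sum_mul, hp.2, one_mul]
    _ ≤ ∑ x, p x * M x y := by
        apply Finset.sum_le_sum
        intro x _
        exact mul_le_mul_of_nonneg_left (hδM x y) (hp.1 x)

lemma p_le_one (p : Fin k → ℝ) (hp : IsProbVec p) : ∀ y, p y ≤ 1 := by
  intro y
  rw [← hp.2]
  exact Finset.single_le_sum (fun x _ => hp.1 x) (Finset.mem_univ y)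

lemma contraction (δ : ℝ) (M : Fin k → Fin k → ℝ) (p : Fin k → ℝ)
    (hk2 : 2 ≤ k) (hδ0 : 0 < δ) (hM : IsTransMat M) (hδM : ∀ i j, δ ≤ M i j)
    (hp : IsProbVec p) (hpst : ∀ j, ∑ x, p x * M x j = p j)
    (g : Fin k → ℝ) (hg : ∑ x, g x = 0) :
    Nrm p (fun y => ∑ x, g x * M x y) ≤ (1 - δ) * Nrm p g := by
  have hppos : ∀ y, 0 < p y := fun y => lt_of_lt_of_le hδ0 (p_ge δ M p hδM hp hpst y)
  have hp1 : ∀ y, p y ≤ 1 := p_le_one p hp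
  have hMδ : ∀ x y, 0 ≤ M x y - δ := fun x y => sub_nonneg.2 (hδM x y)
  have hrow : ∀ x, ∑ y, (M x y - δ) = 1 - k * δ := by
    intro x
    rw [Finset.sum_sub_distrib, (hM x).2, Finset.sum_const, Finset.card_univ,
      Fintype.card_fin, nsmul_eq_mul]
  have hkδ : 0 ≤ 1 - k * δ := by
    rw [← hrow ⟨0, by omega⟩]
    exact Finset.sum_nonneg fun y _ => hMδ _ y
  have hδhalf : δ ≤ 1/2 := by
    have : (2:ℝ) ≤ (k:ℝ) := by exact_mod_cast hk2
    nlinarith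
  have hδ1 : (0:ℝ) ≤ 1 - δ := by linarith
  have key : ∀ y, (∑ x, g x * M x y)^2 ≤ (∑ x, (g x)^2 * (M x y - δ) / p x) * (p y - δ) := by
    intro y
    have e0 : ∑ x, g x * M x y = ∑ x, g x * (M x y - δ) := by
      simp only [mul_sub, Finset.sum_sub_distrib, ← Finset.sum_mul, hg, zero_mul, sub_zero]
    have e1 : ∀ x, g x * (M x y - δ)
        = (g x * Real.sqrt ((M x y - δ) / p x)) * Real.sqrt ((M x y - δ) * p x) := by
      intro x
      rw [mul_assoc, ← Real.sqrt_mul (div_nonneg (hMδ x y) (hppos x).le)]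
      have hx := (hppos x).ne'
      have e2 : (M x y - δ) / p x * ((M x y - δ) * p x) = (M x y - δ)^2 := by
        field_simp
      rw [e2, Real.sqrt_sq (hMδ x y)]
    calc (∑ x, g x * M x y)^2
        = (∑ x, (g x * Real.sqrt ((M x y - δ) / p x)) * Real.sqrt ((M x y - δ) * p x))^2 := by
          rw [e0]
          congr 1
          exact Finset.sum_congr rfl fun x _ => e1 x
      _ ≤ (∑ x, (g x * Real.sqrt ((M x y - δ) / p x))^2)
            * (∑ x, (Real.sqrt ((M x y - δ) * p x))^2) :=
          Finset.sum_mul_sq_le_sq_mul_sq _ _ _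
      _ = (∑ x, (g x)^2 * (M x y - δ) / p x) * (p y - δ) := by
          congr 1
          · apply Finset.sum_congr rfl
            intro x _
            rw [mul_pow, Real.sq_sqrt (div_nonneg (hMδ x y) (hppos x).le), mul_div_assoc]
          · rw [Finset.sum_congr rfl (fun x _ => Real.sq_sqrt (mul_nonneg (hMδ x y) (hppos x).le))]
            have : ∑ x, (M x y - δ) * p x = ∑ x, (p x * M x y - δ * p x) := by
              apply Finset.sum_congr rfl; intro x _; ring
            rw [this, Finset.sum_sub_distrib, hpst y, ← Finset.mul_sum, hp.2, mul_one]
  have inner_nonneg : ∀ y x, 0 ≤ (g x)^2 * (M x y - δ) / p x := by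
    intro y x
    apply div_nonneg (mul_nonneg (sq_nonneg _) (hMδ x y)) (hppos x).le
  have nsq : (∑ y, (∑ x, g x * M x y)^2 / p y) ≤ (1-δ)^2 * ∑ x, (g x)^2 / p x := by
    calc ∑ y, (∑ x, g x * M x y)^2 / p y
        ≤ ∑ y, (∑ x, (g x)^2 * (M x y - δ) / p x) * ((p y - δ) / p y) := by
          apply Finset.sum_le_sum
          intro y _
          calc (∑ x, g x * M x y)^2 / p y
              ≤ ((∑ x, (g x)^2 * (M x y - δ) / p x) * (p y - δ)) / p y :=
                div_le_div_of_nonneg_right (key y) (hppos y).le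
            _ = (∑ x, (g x)^2 * (M x y - δ) / p x) * ((p y - δ) / p y) := mul_div_assoc _ _ _
      _ ≤ ∑ y, (∑ x, (g x)^2 * (M x y - δ) / p x) * (1 - δ) := by
          apply Finset.sum_le_sum
          intro y _
          apply mul_le_mul_of_nonneg_left _ (Finset.sum_nonneg fun x _ => inner_nonneg y x)
          rw [div_le_iff₀ (hppos y)]
          nlinarith [hppos y, hp1 y, hδ0]
      _ = (1-δ) * ∑ x, ((g x)^2 / p x) * (1 - k * δ) := by
          have h1 : ∑ y, (∑ x, (g x)^2 * (M x y - δ) / p x) * (1 - δ)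
              = (1-δ) * ∑ y, ∑ x, (g x)^2 * (M x y - δ) / p x := by
            rw [← Finset.sum_mul, mul_comm]
          rw [h1, Finset.sum_comm]
          congr 1
          apply Finset.sum_congr rfl
          intro x _
          have h2 : ∀ y, (g x)^2 * (M x y - δ) / p x = ((g x)^2 / p x) * (M x y - δ) := by
            intro y; ring
          rw [Finset.sum_congr rfl (fun y _ => h2 y), ← Finset.mul_sum, hrow]
      _ ≤ (1-δ)^2 * ∑ x, (g x)^2 / p x := by
          have hk' : (2:ℝ) ≤ (k:ℝ) := by exact_mod_cast hk2
          have h3 : ∑ x, ((g x)^2 / p x) * (1 - k * δ) ≤ ∑ x, ((g x)^2 / p x) * (1 - δ) := by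
            apply Finset.sum_le_sum
            intro x _
            apply mul_le_mul_of_nonneg_left _ (div_nonneg (sq_nonneg _) (hppos x).le)
            nlinarith
          calc (1-δ) * ∑ x, ((g x)^2 / p x) * (1 - k * δ)
              ≤ (1-δ) * ∑ x, ((g x)^2 / p x) * (1 - δ) := mul_le_mul_of_nonneg_left h3 hδ1
            _ = (1-δ)^2 * ∑ x, (g x)^2 / p x := by
                rw [← Finset.sum_mul, mul_comm ((∑ x, (g x)^2 / p x)) (1-δ)]
                ring
  have hnn : 0 ≤ ∑ x, (g x)^2 / p x := Finset.sum_nonneg fun x _ => div_nonneg (sq_nonneg _) (hppos x).le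
  rw [Nrm, Nrm]
  calc Real.sqrt (∑ y, (∑ x, g x * M x y)^2 / p y)
      ≤ Real.sqrt ((1-δ)^2 * ∑ x, (g x)^2 / p x) := Real.sqrt_le_sqrt nsq
    _ = (1-δ) * Real.sqrt (∑ x, (g x)^2 / p x) := by
        rw [Real.sqrt_mul (sq_nonneg _), Real.sqrt_sq hδ1]


/-- Main MGF bound. -/
lemma mgf_bound (δ l : ℝ) (M : Fin k → Fin k → ℝ) (p f μ : Fin k → ℝ)
    (hk2 : 2 ≤ k) (hδ0 : 0 < δ) (hδ2 : δ ≤ 1/2)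
    (hM : IsTransMat M) (hδM : ∀ i j, δ ≤ M i j)
    (hp : IsProbVec p) (hpst : ∀ j, ∑ x, p x * M x j = p j)
    (hμ : IsProbVec μ)
    (hf1 : ∀ x, |f x| ≤ 1) (hf0 : ∑ x, p x * f x = 0) (hf2 : ∑ x, p x * (f x)^2 ≤ 1/4)
    (hl0 : 0 < l) (hl9 : l ≤ δ/9) (t : ℕ) :
    ∑ z, (Tstep M f l)^[t+1] μ z
      ≤ (89/100) / Real.sqrt δ * Real.exp ((t : ℝ) * (l^2/(2*δ))) := by
  have hppos : ∀ y, 0 < p y := fun y => lt_of_lt_of_le hδ0 (p_ge δ M p hδM hp hpst y)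
  have hp1 : ∀ y, p y ≤ 1 := p_le_one p hp
  have hl18 : l ≤ 1/18 := by linarith
  set E : Fin k → ℝ := fun x => Real.exp (l * f x) with hE
  have hEb : ∀ x, |l * f x| ≤ 1/18 := by
    intro x
    rw [abs_mul, abs_of_pos hl0]
    calc l * |f x| ≤ l * 1 := mul_le_mul_of_nonneg_left (hf1 x) hl0.le
      _ ≤ 1/18 := by linarith
  have hEpos : ∀ x, 0 < E x := fun x => Real.exp_pos _
  have hE1 : ∀ x, E x ≤ 1 + (53/50)*l := by
    intro x
    have h := exp_quad (hEb x)
    have h2 := abs_le.1 (hf1 x)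
    have h3 : (f x)^2 ≤ 1 := by nlinarith [h2.1, h2.2]
    calc E x ≤ 1 + l * f x + (53/50)*(l * f x)^2 := h
      _ ≤ 1 + (53/50)*l := by nlinarith [h2.2, sq_nonneg l]
  have hsum_pE_le : ∑ x, p x * E x ≤ 1 + (53/200)*l^2 := by
    calc ∑ x, p x * E x ≤ ∑ x, p x * (1 + l * f x + (53/50)*(l * f x)^2) :=
          Finset.sum_le_sum fun x _ => mul_le_mul_of_nonneg_left (exp_quad (hEb x)) (hp.1 x)
      _ = ∑ x, (p x + l * (p x * f x) + (53/50)*l^2*(p x * (f x)^2)) := by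
          apply Finset.sum_congr rfl; intro x _; ring
      _ = 1 + l * 0 + (53/50)*l^2 * ∑ x, p x * (f x)^2 := by
          rw [Finset.sum_add_distrib, Finset.sum_add_distrib, ← Finset.mul_sum, ← Finset.mul_sum,
            hp.2, hf0]
      _ ≤ 1 + (53/200)*l^2 := by nlinarith [sq_nonneg l]
  have hsum_pE_ge : 1 ≤ ∑ x, p x * E x := by
    have h1 : (1:ℝ) = ∑ x, p x * (1 + l * f x) := by
      have : ∀ x, p x * (1 + l * f x) = p x + l * (p x * f x) := by intro x; ring
      rw [Finset.sum_congr rfl fun x _ => this x, Finset.sum_add_distrib, ← Finset.mul_sum,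
        hp.2, hf0, mul_zero, add_zero]
    rw [h1]
    apply Finset.sum_le_sum
    intro x _
    apply mul_le_mul_of_nonneg_left _ (hp.1 x)
    have := Real.add_one_le_exp (l * f x)
    linarith
  have habs_pE : |(∑ x, p x * E x) - 1| ≤ (53/200)*l^2 := by
    rw [abs_le]
    constructor
    · nlinarith [sq_nonneg l]
    · linarith
  have hEd : ∑ x, p x * (E x - 1)^2 ≤ ((53/100)*l)^2 := by
    calc ∑ x, p x * (E x - 1)^2 ≤ ∑ x, p x * ((53/50)^2 * l^2 * (f x)^2) := by
          apply Finset.sum_le_sum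
          intro x _
          apply mul_le_mul_of_nonneg_left _ (hp.1 x)
          have h := exp_sub_one_abs (hEb x)
          have h2 : |E x - 1| ≤ (53/50) * (l * |f x|) := by
            rw [abs_mul, abs_of_pos hl0] at h; exact h
          calc (E x - 1)^2 = |E x - 1|^2 := (sq_abs _).symm
            _ ≤ ((53/50) * (l * |f x|))^2 := by
                apply pow_le_pow_left₀ (abs_nonneg _) h2
            _ = (53/50)^2 * l^2 * (f x)^2 := by rw [mul_pow, mul_pow, sq_abs]; ring
      _ = (53/50)^2 * l^2 * ∑ x, p x * (f x)^2 := by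
          have h4 : ∀ x : Fin k, p x * ((53/50)^2 * l^2 * (f x)^2)
              = (53/50)^2*l^2*(p x * (f x)^2) := fun x => by ring
          rw [Finset.sum_congr rfl fun x _ => h4 x, ← Finset.mul_sum]
      _ ≤ ((53/100)*l)^2 := by nlinarith [sq_nonneg l]
  -- the vectors
  set vv : ℕ → Fin k → ℝ := fun s x => (Tstep M f l)^[s] μ x * E x with hvv
  set cc : ℕ → ℝ := fun s => ∑ x, vv s x with hcc
  set ww : ℕ → Fin k → ℝ := fun s x => vv s x - cc s * p x with hww
  set bb : ℕ → ℝ := fun s => Nrm p (ww s) with hbb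
  have hTnn : ∀ s x, 0 ≤ (Tstep M f l)^[s] μ x := by
    intro s
    induction s with
    | zero => exact fun x => hμ.1 x
    | succ s IH =>
        intro x
        rw [Function.iterate_succ_apply']
        exact Finset.sum_nonneg fun z _ =>
          mul_nonneg (mul_nonneg (IH z) (Real.exp_pos _).le) ((hM z).1 x)
  have hvv_nn : ∀ s x, 0 ≤ vv s x := fun s x => mul_nonneg (hTnn s x) (hEpos x).le
  have hcc_nn : ∀ s, 0 ≤ cc s := fun s => Finset.sum_nonneg fun x _ => hvv_nn s x
  have hbb_nn : ∀ s, 0 ≤ bb s := fun s => nrm_nonneg _ _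
  have hsum_ww : ∀ s, ∑ x, ww s x = 0 := by
    intro s
    show ∑ x, (vv s x - cc s * p x) = 0
    rw [Finset.sum_sub_distrib, ← Finset.mul_sum, hp.2, mul_one, sub_self]
  have hvv_succ : ∀ s y, vv (s+1) y = (∑ x, vv s x * M x y) * E y := by
    intro s y
    show (Tstep M f l)^[s+1] μ y * E y = _
    rw [Function.iterate_succ_apply']
    congr 1
  have hdecomp : ∀ s y, ∑ x, vv s x * M x y = cc s * p y + ∑ x, ww s x * M x y := by
    intro s y
    have h1 : ∀ x, vv s x * M x y = ww s x * M x y + cc s * (p x * M x y) := by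
      intro x; show vv s x * M x y = (vv s x - cc s * p x) * M x y + cc s * (p x * M x y); ring
    rw [Finset.sum_congr rfl fun x _ => h1 x, Finset.sum_add_distrib, ← Finset.mul_sum, hpst y]
    ring
  set wM : ℕ → Fin k → ℝ := fun s y => ∑ x, ww s x * M x y with hwM
  have hswM : ∀ s, ∑ y, wM s y = 0 := by
    intro s
    show ∑ y, ∑ x, ww s x * M x y = 0
    rw [Finset.sum_comm]
    have h1 : ∀ x, ∑ y, ww s x * M x y = ww s x := by
      intro x; rw [← Finset.mul_sum, (hM x).2, mul_one]
    rw [Finset.sum_congr rfl fun x _ => h1 x, hsum_ww s]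
  have hbound_wM : ∀ s, Nrm p (wM s) ≤ (1-δ) * bb s := fun s =>
    contraction δ M p hk2 hδ0 hM hδM hp hpst (ww s) (hsum_ww s)
  have hpair : ∀ s, |∑ y, wM s y * (E y - 1)| ≤ (1-δ) * bb s * ((53/100)*l) := by
    intro s
    calc |∑ y, wM s y * (E y - 1)|
        ≤ Nrm p (wM s) * Real.sqrt (∑ y, p y * (E y - 1)^2) := pair_le p _ _ hppos
      _ ≤ ((1-δ) * bb s) * ((53/100)*l) := by
          apply mul_le_mul (hbound_wM s) _ (Real.sqrt_nonneg _)
            (mul_nonneg (by linarith) (hbb_nn s))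
          calc Real.sqrt (∑ y, p y * (E y - 1)^2) ≤ Real.sqrt (((53/100)*l)^2) :=
                Real.sqrt_le_sqrt hEd
            _ = (53/100)*l := Real.sqrt_sq (by positivity)
  have hcc_succ : ∀ s, cc (s+1) = cc s * (∑ y, p y * E y) + ∑ y, wM s y * (E y - 1) := by
    intro s
    have h0 : cc (s+1) = ∑ y, (cc s * p y + wM s y) * E y := by
      show ∑ y, vv (s+1) y = _
      apply Finset.sum_congr rfl
      intro y _
      rw [hvv_succ s y, hdecomp s y]
    rw [h0]
    have h1 : ∀ y, (cc s * p y + wM s y) * E y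
        = cc s * (p y * E y) + (wM s y * (E y - 1) + wM s y) := by intro y; ring
    rw [Finset.sum_congr rfl fun y _ => h1 y, Finset.sum_add_distrib, ← Finset.mul_sum,
      Finset.sum_add_distrib, hswM s, add_zero]
  have R1 : ∀ s, cc (s+1) ≤ (1+(53/200)*l^2) * cc s + ((53/100)*l*(1-δ)) * bb s := by
    intro s
    rw [hcc_succ s]
    have h1 : cc s * (∑ y, p y * E y) ≤ cc s * (1+(53/200)*l^2) :=
      mul_le_mul_of_nonneg_left hsum_pE_le (hcc_nn s)
    have h2 : ∑ y, wM s y * (E y - 1) ≤ (1-δ) * bb s * ((53/100)*l) :=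
      (le_abs_self _).trans (hpair s)
    nlinarith
  have R2 : ∀ s, |cc (s+1) - cc s| ≤ (53/200)*l^2 * cc s + ((53/100)*l*(1-δ)) * bb s := by
    intro s
    rw [hcc_succ s]
    have h0 : cc s * (∑ y, p y * E y) + (∑ y, wM s y * (E y - 1)) - cc s
        = cc s * ((∑ y, p y * E y) - 1) + (∑ y, wM s y * (E y - 1)) := by ring
    rw [h0]
    calc |cc s * ((∑ y, p y * E y) - 1) + (∑ y, wM s y * (E y - 1))|
        ≤ |cc s * ((∑ y, p y * E y) - 1)| + |∑ y, wM s y * (E y - 1)| := abs_add_le _ _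
      _ ≤ (53/200)*l^2 * cc s + ((53/100)*l*(1-δ)) * bb s := by
          have h1 : |cc s * ((∑ y, p y * E y) - 1)| = cc s * |(∑ y, p y * E y) - 1| := by
            rw [abs_mul, abs_of_nonneg (hcc_nn s)]
          have h2 := hpair s
          have h3 : cc s * |(∑ y, p y * E y) - 1| ≤ cc s * ((53/200)*l^2) :=
            mul_le_mul_of_nonneg_left habs_pE (hcc_nn s)
          rw [h1]
          nlinarith
  have hwsucc : ∀ s x, ww (s+1) x
      = cc s * (p x * (E x - 1)) + wM s x * E x + (cc s - cc (s+1)) * p x := by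
    intro s x
    show vv (s+1) x - cc (s+1) * p x = _
    rw [hvv_succ s x, hdecomp s x]
    ring
  have hNrm_pE : Nrm p (fun x => p x * (E x - 1)) ≤ (53/100)*l := by
    rw [Nrm]
    have h1 : ∀ x, (p x * (E x - 1))^2 / p x = p x * (E x - 1)^2 := by
      intro x
      field_simp [(hppos x).ne']
    rw [Finset.sum_congr rfl fun x _ => h1 x]
    calc Real.sqrt (∑ x, p x * (E x - 1)^2) ≤ Real.sqrt (((53/100)*l)^2) :=
          Real.sqrt_le_sqrt hEd
      _ = (53/100)*l := Real.sqrt_sq (by positivity)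
  have R3 : ∀ s, bb (s+1) ≤ ((109/200)*l) * cc s + ((1-δ)*(1+(159/100)*l)) * bb s := by
    intro s
    have hb : bb (s+1) = Nrm p (fun x =>
        cc s * (p x * (E x - 1)) + wM s x * E x + (cc s - cc (s+1)) * p x) := by
      show Nrm p (ww (s+1)) = _
      congr 1
      funext x
      exact hwsucc s x
    rw [hb]
    have h1 : Nrm p (fun x => cc s * (p x * (E x - 1))) ≤ cc s * ((53/100)*l) := by
      rw [nrm_smul p _ (cc s) (fun x => (hppos x).le), abs_of_nonneg (hcc_nn s)]
      exact mul_le_mul_of_nonneg_left hNrm_pE (hcc_nn s)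
    have h2 : Nrm p (fun x => wM s x * E x) ≤ (1+(53/50)*l) * ((1-δ) * bb s) := by
      calc Nrm p (fun x => wM s x * E x) ≤ (1+(53/50)*l) * Nrm p (wM s) := by
            apply nrm_mul_le p _ _ _ (by positivity) _ hppos
            intro x
            rw [abs_of_pos (hEpos x)]
            exact hE1 x
        _ ≤ (1+(53/50)*l) * ((1-δ) * bb s) := by
            apply mul_le_mul_of_nonneg_left (hbound_wM s) (by positivity)
    have h3 : Nrm p (fun x => (cc s - cc (s+1)) * p x)
        ≤ (53/200)*l^2 * cc s + ((53/100)*l*(1-δ)) * bb s := by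
      rw [nrm_smul p _ _ (fun x => (hppos x).le), nrm_p_eq_one p hppos hp.2, mul_one,
        abs_sub_comm]
      exact R2 s
    calc Nrm p (fun x =>
        cc s * (p x * (E x - 1)) + wM s x * E x + (cc s - cc (s+1)) * p x)
        ≤ Nrm p (fun x => cc s * (p x * (E x - 1))) + Nrm p (fun x => wM s x * E x)
          + Nrm p (fun x => (cc s - cc (s+1)) * p x) :=
          nrm_add3 p _ _ _ (fun x => (hppos x).le)
      _ ≤ (cc s * ((53/100)*l)) + ((1+(53/50)*l) * ((1-δ) * bb s))
          + ((53/200)*l^2 * cc s + ((53/100)*l*(1-δ)) * bb s) := by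
          exact add_le_add (add_le_add h1 h2) h3
      _ ≤ ((109/200)*l) * cc s + ((1-δ)*(1+(159/100)*l)) * bb s := by
          have hclhs : cc s * ((53/100)*l) + (53/200)*l^2*cc s ≤ ((109/200)*l)*cc s := by
            have h9 : 0 ≤ cc s * (l * (1/18 - l)) :=
              mul_nonneg (hcc_nn s) (mul_nonneg hl0.le (sub_nonneg.2 hl18))
            have h10 : 0 ≤ cc s * l := mul_nonneg (hcc_nn s) hl0.le
            nlinarith [h9, h10]
          have hbbeq : (1+(53/50)*l)*((1-δ)*bb s) + ((53/100)*l*(1-δ))*bb s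
              = ((1-δ)*(1+(159/100)*l))*bb s := by ring
          linarith
  -- potential function
  set θ : ℝ := (133/200)*(l/δ) with hθdef
  set G : ℝ := 1 + l^2/(2*δ) with hGdef
  have hθ0 : 0 ≤ θ := by positivity
  have hG1 : 1 ≤ G := by
    rw [hGdef]
    have : 0 ≤ l^2/(2*δ) := by positivity
    linarith
  have hθδ : θ * δ = (133/200)*l := by
    rw [hθdef]
    field_simp
  have key1 : (1+(53/200)*l^2) + θ*((109/200)*l) ≤ G := by
    rw [hGdef]
    have h1 : ((53/200)*l^2 + θ*((109/200)*l)) * δ ≤ l^2/2 := by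
      have h2 : θ*((109/200)*l)*δ = (133/200)*(109/200)*l^2 := by
        rw [mul_right_comm, hθδ]; ring
      nlinarith [sq_nonneg l, hδ0, hδ2]
    have h3 : (53/200)*l^2 + θ*((109/200)*l) ≤ (l^2/2)/δ := by
      rw [le_div_iff₀ hδ0]
      exact h1
    rw [div_div] at h3
    linarith [h3]
  have key2 : (53/100)*l*(1-δ) + θ*((1-δ)*(1+(159/100)*l)) ≤ G*θ := by
    have hr : (1-δ)*(1+(159/100)*l) ≤ 1 - (41/50)*δ := by nlinarith [hl9, hδ0, hδ2, hl0]
    have h1 : (53/100)*l*(1-δ) ≤ θ*((41/50)*δ) := by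
      have h2 : θ*((41/50)*δ) = (41/50)*((133/200)*l) := by rw [mul_comm ((41:ℝ)/50) δ, ← mul_assoc, hθδ]; ring
      rw [h2]
      nlinarith [hl0, hδ0, hδ2]
    have h3 : θ*((1-δ)*(1+(159/100)*l)) ≤ θ*(1 - (41/50)*δ) :=
      mul_le_mul_of_nonneg_left hr hθ0
    have h4 : θ ≤ G*θ := le_mul_of_one_le_left hθ0 hG1
    calc (53/100)*l*(1-δ) + θ*((1-δ)*(1+(159/100)*l))
        ≤ θ*((41/50)*δ) + θ*(1 - (41/50)*δ) := add_le_add h1 h3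
      _ = θ := by ring
      _ ≤ G*θ := h4
  have hΦstep : ∀ s, cc (s+1) + θ*bb (s+1) ≤ G*(cc s + θ*bb s) := by
    intro s
    calc cc (s+1) + θ*bb (s+1)
        ≤ ((1+(53/200)*l^2) * cc s + ((53/100)*l*(1-δ)) * bb s)
          + θ*(((109/200)*l) * cc s + ((1-δ)*(1+(159/100)*l)) * bb s) :=
          add_le_add (R1 s) (mul_le_mul_of_nonneg_left (R3 s) hθ0)
      _ = ((1+(53/200)*l^2) + θ*((109/200)*l)) * cc s
          + ((53/100)*l*(1-δ) + θ*((1-δ)*(1+(159/100)*l))) * bb s := by ring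
      _ ≤ G * cc s + (G*θ) * bb s :=
          add_le_add (mul_le_mul_of_nonneg_right key1 (hcc_nn s))
            (mul_le_mul_of_nonneg_right key2 (hbb_nn s))
      _ = G*(cc s + θ*bb s) := by ring
  have hΦpow : ∀ s, cc s + θ*bb s ≤ G^s * (cc 0 + θ*bb 0) := by
    intro s
    induction s with
    | zero => rw [pow_zero, one_mul]
    | succ s IH =>
        calc cc (s+1) + θ*bb (s+1) ≤ G*(cc s + θ*bb s) := hΦstep s
          _ ≤ G*(G^s * (cc 0 + θ*bb 0)) := mul_le_mul_of_nonneg_left IH (by linarith)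
          _ = G^(s+1) * (cc 0 + θ*bb 0) := by ring
  -- Φ0 bound
  set sd := Real.sqrt δ with hsd
  have hsd0 : 0 < sd := Real.sqrt_pos.2 hδ0
  have hsd2 : sd * sd = δ := Real.mul_self_sqrt hδ0.le
  have hsd7 : sd ≤ 7072/10000 := by nlinarith [hsd0, hsd2, hδ2]
  have hμ1 : ∀ x, μ x ≤ 1 := p_le_one μ hμ
  have hcc0 : cc 0 ≤ 953/900 := by
    have h0 : cc 0 = ∑ x, μ x * E x := by
      apply Finset.sum_congr rfl
      intro x _
      show (Tstep M f l)^[0] μ x * E x = μ x * E x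
      rw [Function.iterate_zero_apply]
    rw [h0]
    calc ∑ x, μ x * E x ≤ ∑ x, μ x * (1+(53/50)*l) :=
          Finset.sum_le_sum fun x _ => mul_le_mul_of_nonneg_left (hE1 x) (hμ.1 x)
      _ = 1+(53/50)*l := by rw [← Finset.sum_mul, hμ.2, one_mul]
      _ ≤ 953/900 := by linarith
  have hNv0 : Nrm p (vv 0) ≤ (953/900)/sd := by
    have h1 : ∑ x, (vv 0 x)^2 / p x ≤ (953/900)^2/δ := by
      calc ∑ x, (vv 0 x)^2 / p x ≤ ∑ x, μ x * ((953/900)^2/δ) := by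
            apply Finset.sum_le_sum
            intro x _
            have hv0 : vv 0 x = μ x * E x := by
              show (Tstep M f l)^[0] μ x * E x = μ x * E x
              rw [Function.iterate_zero_apply]
            rw [hv0, div_le_iff₀ (hppos x)]
            have hEx : E x ≤ 953/900 := (hE1 x).trans (by linarith)
            have hpx := p_ge δ M p hδM hp hpst x
            have h2 : (μ x * E x)^2 ≤ μ x * (953/900)^2 := by
              have e2 : E x^2 ≤ (953/900)^2 := by nlinarith [hEx, (hEpos x).le]
              have e3 : μ x^2 ≤ μ x := by nlinarith [hμ.1 x, hμ1 x]
              calc (μ x * E x)^2 = μ x^2 * E x^2 := by ring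
                _ ≤ μ x^2 * (953/900)^2 := mul_le_mul_of_nonneg_left e2 (sq_nonneg _)
                _ ≤ μ x * (953/900)^2 := mul_le_mul_of_nonneg_right e3 (by positivity)
            calc (μ x * E x)^2 ≤ μ x * (953/900)^2 := h2
              _ = μ x * ((953/900)^2/δ) * δ := by field_simp
              _ ≤ μ x * ((953/900)^2/δ) * p x := by
                  apply mul_le_mul_of_nonneg_left hpx
                  exact mul_nonneg (hμ.1 x) (by positivity)
        _ = (953/900)^2/δ := by rw [← Finset.sum_mul, hμ.2, one_mul]
    calc Nrm p (vv 0) ≤ Real.sqrt ((953/900)^2/δ) := Real.sqrt_le_sqrt h1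
      _ = (953/900)/sd := by
          rw [Real.sqrt_div (sq_nonneg _), Real.sqrt_sq (by norm_num)]
  have hbb0 : bb 0 ≤ (953/900)/sd + 953/900 := by
    have h1 : bb 0 = Nrm p (fun x => vv 0 x + (-(cc 0)) * p x) := by
      show Nrm p (ww 0) = _
      congr 1
      funext x
      show vv 0 x - cc 0 * p x = _
      ring
    rw [h1]
    calc Nrm p (fun x => vv 0 x + (-(cc 0)) * p x)
        ≤ Nrm p (vv 0) + Nrm p (fun x => (-(cc 0)) * p x) :=
          nrm_add2 p _ _ (fun x => (hppos x).le)
      _ ≤ (953/900)/sd + 953/900 := by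
          rw [nrm_smul p _ _ (fun x => (hppos x).le), nrm_p_eq_one p hppos hp.2, mul_one,
            abs_neg, abs_of_nonneg (hcc_nn 0)]
          exact add_le_add hNv0 hcc0
  have hθle : θ ≤ 133/1800 := by
    rw [hθdef]
    have : l/δ ≤ 1/9 := by
      rw [div_le_iff₀ hδ0]
      linarith
    linarith
  have hΦ0 : cc 0 + θ*bb 0 ≤ (89/100)/sd := by
    have h1 : cc 0 + θ*bb 0 ≤ 953/900 + (133/1800)*((953/900)/sd + 953/900) :=
      add_le_add hcc0 (mul_le_mul hθle hbb0 (hbb_nn 0) (by norm_num))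
    rw [le_div_iff₀ hsd0]
    have h2 : (953/900 + (133/1800)*((953/900)/sd + 953/900)) * sd
        = (953/900)*sd + (133/1800)*(953/900) + (133/1800)*(953/900)*sd := by
      field_simp
      ring
    calc (cc 0 + θ*bb 0) * sd ≤ (953/900 + (133/1800)*((953/900)/sd + 953/900)) * sd := by
          apply mul_le_mul_of_nonneg_right h1 hsd0.le
      _ = (953/900)*sd + (133/1800)*(953/900) + (133/1800)*(953/900)*sd := h2
      _ ≤ 89/100 := by nlinarith [hsd7, hsd0]
  -- conclusion
  have hfinal : ∑ z, (Tstep M f l)^[t+1] μ z = cc t := by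
    have h1 : ∀ z, (Tstep M f l)^[t+1] μ z = ∑ x, vv t x * M x z := by
      intro z
      rw [Function.iterate_succ_apply']
      show ∑ x, (Tstep M f l)^[t] μ x * Real.exp (l * f x) * M x z = _
      apply Finset.sum_congr rfl
      intro x _
      rfl
    rw [Finset.sum_congr rfl fun z _ => h1 z, Finset.sum_comm]
    apply Finset.sum_congr rfl
    intro x _
    rw [← Finset.mul_sum, (hM x).2, mul_one]
  rw [hfinal]
  have hG0 : (0:ℝ) ≤ G := by linarith
  calc cc t ≤ cc t + θ*bb t := le_add_of_nonneg_right (mul_nonneg hθ0 (hbb_nn t))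
    _ ≤ G^t * (cc 0 + θ*bb 0) := hΦpow t
    _ ≤ G^t * ((89/100)/sd) := mul_le_mul_of_nonneg_left hΦ0 (pow_nonneg hG0 t)
    _ ≤ Real.exp ((t : ℝ) * (l^2/(2*δ))) * ((89/100)/sd) := by
        apply mul_le_mul_of_nonneg_right _ (by positivity)
        calc G^t ≤ (Real.exp (l^2/(2*δ)))^t := by
              apply pow_le_pow_left₀ hG0
              rw [hGdef]
              have := Real.add_one_le_exp (l^2/(2*δ))
              linarith
          _ = Real.exp ((t : ℝ) * (l^2/(2*δ))) := (Real.exp_nat_mul _ t).symm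
    _ = (89/100) / sd * Real.exp ((t : ℝ) * (l^2/(2*δ))) := by ring


lemma countState_eq (N : ℕ) (hN : 1 ≤ N) (x : Fin N → Fin k) (i : Fin k) (c : ℝ) :
    (countState x i : ℝ) - ((N:ℝ) - 1) * c
      = DsumF (fun y => (if y = i then (1:ℝ) else 0) - c) N x := by
  obtain ⟨m, rfl⟩ : ∃ m, N = m + 1 := ⟨N - 1, by omega⟩
  push_cast
  have h1 : (countState x i : ℝ) = ∑ s : Fin m, (if x (Fin.castSucc s) = i then (1:ℝ) else 0) := by
    rw [countState, Finset.card_filter]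
    push_cast
    rw [Fin.sum_univ_castSucc]
    have hlast : (if ((Fin.last m).1 < m ∧ x (Fin.last m) = i) then (1:ℝ) else 0) = 0 := by
      apply if_neg
      simp [Fin.last]
    rw [hlast, add_zero]
    apply Finset.sum_congr rfl
    intro s _
    apply if_congr _ rfl rfl
    have : (Fin.castSucc s).1 = s.1 := rfl
    simp [this, s.isLt]
  have h3 : DsumF (fun y => (if y = i then (1:ℝ) else 0) - c) (m+1) x
      = ∑ s : Fin m, ((if x (Fin.castSucc s) = i then (1:ℝ) else 0) - c) := by
    show (∑ s : Fin m, ((if x ⟨s.1, by have := s.2; omega⟩ = i then (1:ℝ) else 0) - c)) = _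
    apply Finset.sum_congr rfl
    intro s _
    have he : (⟨s.1, by have := s.2; omega⟩ : Fin (m+1)) = Fin.castSucc s := by
      apply Fin.ext
      rfl
    rw [he]
  rw [h1, h3, Finset.sum_sub_distrib, Finset.sum_const, Finset.card_univ, Fintype.card_fin]
  push_cast
  ring

lemma DsumF_neg (f : Fin k → ℝ) (N : ℕ) (x : Fin N → Fin k) :
    DsumF (fun y => -(f y)) N x = -(DsumF f N x) := by
  rw [DsumF, DsumF, ← Finset.sum_neg_distrib]

lemma Cdelta_bound (δ : ℝ) (hδ0 : 0 < δ) (hδ2 : δ ≤ 1/2) :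
    (119/100) ≤ Cdelta δ * δ ∧ 0 < Cdelta δ := by
  have h1δ : (0:ℝ) < 1 - δ := by linarith
  have hlogneg : Real.log (1-δ) < 0 := Real.log_neg h1δ (by linarith)
  have hlog4 : Real.log 4 = 2 * Real.log 2 := by
    rw [show (4:ℝ) = 2^2 by norm_num, Real.log_pow]
    push_cast
    ring
  have hl2 := Real.log_two_gt_d9
  have hub : -Real.log (1-δ) ≤ δ/(1-δ) := by
    have h2 : Real.log ((1-δ)⁻¹) ≤ (1-δ)⁻¹ - 1 := Real.log_le_sub_one_of_pos (by positivity)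
    rw [Real.log_inv] at h2
    have h3 : (1-δ)⁻¹ - 1 = δ/(1-δ) := by field_simp; ring
    linarith [h3 ▸ h2]
  have hubpos : 0 < -Real.log (1-δ) := by linarith
  have hlb : Real.log 4 * (1-δ)/δ ≤ -Real.log 4 / Real.log (1-δ) := by
    have h4 : -Real.log 4 / Real.log (1-δ) = Real.log 4 / (-Real.log (1-δ)) := by
      rw [div_neg, neg_div]
    rw [h4]
    have h5 : Real.log 4 / (δ/(1-δ)) ≤ Real.log 4 / (-Real.log (1-δ)) := by
      apply div_le_div_of_nonneg_left _ hubpos hub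
      nlinarith
    have h6 : Real.log 4 / (δ/(1-δ)) = Real.log 4 * (1-δ)/δ := by
      field_simp
    linarith [h6 ▸ h5]
  have hceil : -Real.log 4 / Real.log (1-δ) + 1 ≤ Cdelta δ := Int.le_ceil _
  have hCd : Real.log 4 * (1-δ)/δ + 1 ≤ Cdelta δ := by linarith
  constructor
  · have h7 : (Real.log 4 * (1-δ)/δ + 1) * δ = Real.log 4 * (1-δ) + δ := by
      field_simp
    have h8 : (Real.log 4 * (1-δ)/δ + 1) * δ ≤ Cdelta δ * δ :=
      mul_le_mul_of_nonneg_right hCd hδ0.le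
    rw [h7] at h8
    nlinarith
  · have h9 : (0:ℝ) < Real.log 4 * (1-δ)/δ + 1 := by
      have : 0 < Real.log 4 := by nlinarith
      positivity
    linarith

/-- Closing numeric lemma. -/
lemma closing (δ t T l sb : ℝ) (hδ0 : 0 < δ) (hT : Real.log 2 < T)
    (hE : (14/10)*T ≤ l*t - sb*(l^2/(2*δ))) :
    (178/100) * Real.exp (sb*(l^2/(2*δ)) - l*t) ≤ Real.sqrt 2 * Real.exp (-T) := by
  have hl2 := Real.log_two_gt_d9
  have h1 : sb*(l^2/(2*δ)) - l*t ≤ -T - 277/1000 := by nlinarith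
  have h2 : Real.exp (sb*(l^2/(2*δ)) - l*t) ≤ Real.exp (-T) * Real.exp (-(277/1000)) := by
    rw [← Real.exp_add]
    exact Real.exp_le_exp.2 (by linarith)
  have h3 : Real.exp (-(277/1000)) ≤ 1000/1277 := by
    have h4 : (277/1000 : ℝ) + 1 ≤ Real.exp (277/1000) := Real.add_one_le_exp _
    have h5 : Real.exp (-(277/1000)) * Real.exp (277/1000) = 1 := by
      rw [← Real.exp_add]; simp
    nlinarith [Real.exp_pos (-(277/1000 : ℝ)), Real.exp_pos (277/1000 : ℝ)]
  have hsq2 : (1780/1277 : ℝ) ≤ Real.sqrt 2 := by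
    nlinarith [Real.sq_sqrt (by norm_num : (0:ℝ) ≤ 2), Real.sqrt_nonneg 2]
  calc (178/100) * Real.exp (sb*(l^2/(2*δ)) - l*t)
      ≤ (178/100) * (Real.exp (-T) * Real.exp (-(277/1000))) := by
        apply mul_le_mul_of_nonneg_left h2 (by norm_num)
    _ ≤ (178/100) * (Real.exp (-T) * (1000/1277)) := by
        apply mul_le_mul_of_nonneg_left _ (by norm_num)
        exact mul_le_mul_of_nonneg_left h3 (Real.exp_pos _).le
    _ = (1780/1277) * Real.exp (-T) := by ring
    _ ≤ Real.sqrt 2 * Real.exp (-T) :=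
        mul_le_mul_of_nonneg_right hsq2 (Real.exp_pos _).le


end L17

open L17

/-- Lemma 17: concentration of the state-occupation counts `N_i` around `(n-1)·π_i`
for chains in `𝕄^k_δ`. -/
theorem count_concentration (k n : ℕ) (hk2 : 2 ≤ k) (hn : 1 ≤ n)
    (δ : ℝ) (hδ0 : 0 < δ) (hδk : δ < 1 / k)
    (μ : Fin k → ℝ) (M : Fin k → Fin k → ℝ) (pi : Fin k → ℝ)
    (hμ : IsProbVec μ) (hM : IsTransMat M) (hpi : IsStationaryVec M pi)
    (hδM : ∀ i j, δ ≤ M i j) (i : Fin k) (t : ℝ) (ht : 0 ≤ t) :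
    ∑ x ∈ Finset.univ.filter (fun x : Fin n → Fin k =>
        t < |(countState x i : ℝ) - ((n : ℝ) - 1) * pi i|),
      seqProb n μ M x ≤
      Real.sqrt (2 / δ) *
        Real.exp (-(t ^ 2 / Cdelta δ) /
          (4 * (((n : ℝ) - 1) + 2 * Cdelta δ) + 40 * t)) := by
  have hkR : (2:ℝ) ≤ (k:ℝ) := by exact_mod_cast hk2
  have hδ2 : δ ≤ 1/2 := by
    have h1 : (1:ℝ)/(k:ℝ) ≤ 1/2 := by
      apply one_div_le_one_div_of_le <;> linarith
    linarith
  obtain ⟨hCb, hC0⟩ := Cdelta_bound δ hδ0 hδ2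
  set C := Cdelta δ with hCdef
  have hnR : (1:ℝ) ≤ (n:ℝ) := by exact_mod_cast hn
  have hm0 : (0:ℝ) ≤ (n:ℝ) - 1 := by linarith
  have hDen : 0 < 4 * (((n : ℝ) - 1) + 2 * C) + 40 * t := by nlinarith
  set T := (t^2/C) / (4 * (((n : ℝ) - 1) + 2 * C) + 40 * t) with hTdef
  have hexp2 : -(t ^ 2 / C) / (4 * (((n : ℝ) - 1) + 2 * C) + 40 * t) = -T := by
    rw [hTdef, neg_div]
  rw [hexp2]
  have hRHS0 : 0 ≤ Real.sqrt (2/δ) * Real.exp (-T) := by positivity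
  rcases Nat.lt_or_ge n 2 with hn1 | hn2
  · -- n = 1
    have hle : ∀ x : Fin n → Fin k, ¬ (t < |(countState x i : ℝ) - ((n : ℝ) - 1) * pi i|) := by
      intro x
      have hc : countState x i = 0 := by
        rw [countState, Finset.card_eq_zero, Finset.filter_eq_empty_iff]
        intro s _
        rintro ⟨h1, -⟩
        omega
      have hnn : (n:ℝ) = 1 := by
        have : n = 1 := by omega
        rw [this]; norm_num
      have h0 : ((0:ℕ):ℝ) - ((n:ℝ) - 1) * pi i = 0 := by
        rw [hnn]; push_cast; ring
      rw [hc, h0, abs_zero]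
      exact not_lt.2 ht
    rw [Finset.filter_false_of_mem (fun x _ => hle x), Finset.sum_empty]
    exact hRHS0
  · rcases le_or_gt 1 (Real.sqrt (2/δ) * Real.exp (-T)) with htriv | hhard
    · -- trivial regime
      calc ∑ x ∈ Finset.univ.filter (fun x : Fin n → Fin k =>
            t < |(countState x i : ℝ) - ((n : ℝ) - 1) * pi i|), seqProb n μ M x
          ≤ ∑ x : Fin n → Fin k, seqProb n μ M x := by
            apply Finset.sum_le_sum_of_subset_of_nonneg (Finset.filter_subset _ _)
            intro x _ _
            exact seqProb_nonneg M hM n μ hμ.1 x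
        _ = 1 := sum_seqProb M hM n hn μ hμ
        _ ≤ _ := htriv
    · -- hard regime
      obtain ⟨m2, rfl⟩ : ∃ m2, n = m2 + 2 := ⟨n - 2, by omega⟩
      -- basic constants
      have hl2 := Real.log_two_gt_d9
      have hs4 : (2:ℝ) ≤ Real.sqrt (2/δ) := by
        have h1 : (4:ℝ) ≤ 2/δ := by
          rw [le_div_iff₀ hδ0]
          linarith
        have h2 := Real.sqrt_le_sqrt h1
        rw [show (4:ℝ) = 2^2 by norm_num, Real.sqrt_sq (by norm_num : (0:ℝ) ≤ 2)] at h2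
        exact h2
      have h6 : Real.exp (-T) < 1/2 := by
        nlinarith [Real.exp_pos (-T)]
      have hT2 : Real.log 2 < T := by
        have h7 := Real.log_lt_log (Real.exp_pos (-T)) h6
        rw [Real.log_exp] at h7
        have h8 : Real.log (1/2) = -Real.log 2 := by rw [one_div, Real.log_inv]
        rw [h8] at h7
        linarith
      have ht0 : 0 < t := by
        rcases lt_or_eq_of_le ht with h | h
        · exact h
        · exfalso
          have hT0' : T = 0 := by rw [hTdef, ← h]; norm_num
          rw [hT0'] at hT2
          linarith
      -- pi facts
      have hππ1 : pi i ≤ 1 := p_le_one pi hpi.1 i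
      have hππ0 : 0 ≤ pi i := hpi.1.1 i
      -- the observable f
      set f : Fin k → ℝ := fun y => (if y = i then (1:ℝ) else 0) - pi i with hfdef
      have hf1 : ∀ x, |f x| ≤ 1 := by
        intro x
        simp only [hfdef]
        rw [abs_le]
        constructor <;> split_ifs <;> linarith
      have hsum_ind : ∑ x, pi x * (if x = i then (1:ℝ) else 0) = pi i := by
        have h1 : ∀ x, pi x * (if x = i then (1:ℝ) else 0) = (if x = i then pi x else 0) := by
          intro x; split_ifs <;> ring
        rw [Finset.sum_congr rfl fun x _ => h1 x]
        simp
      have hf0 : ∑ x, pi x * f x = 0 := by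
        have h1 : ∀ x, pi x * f x = pi x * (if x = i then (1:ℝ) else 0) - pi i * pi x := by
          intro x; simp only [hfdef]; ring
        rw [Finset.sum_congr rfl fun x _ => h1 x, Finset.sum_sub_distrib, hsum_ind,
          ← Finset.mul_sum, hpi.1.2, mul_one, sub_self]
      have hf2 : ∑ x, pi x * (f x)^2 ≤ 1/4 := by
        have h1 : ∀ x, pi x * (f x)^2
            = (pi x * (if x = i then (1:ℝ) else 0))*(1 - 2*pi i) + (pi i)^2 * pi x := by
          intro x; simp only [hfdef]; split_ifs <;> ring
        rw [Finset.sum_congr rfl fun x _ => h1 x, Finset.sum_add_distrib, ← Finset.sum_mul,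
          hsum_ind, ← Finset.mul_sum, hpi.1.2, mul_one]
        nlinarith [sq_nonneg (pi i - 1/2)]
      have hf1' : ∀ x, |(fun y => -(f y)) x| ≤ 1 := by
        intro x
        rw [abs_neg]
        exact hf1 x
      have hf0' : ∑ x, pi x * (fun y => -(f y)) x = 0 := by
        simp only [mul_neg]
        rw [Finset.sum_neg_distrib, hf0, neg_zero]
      have hf2' : ∑ x, pi x * ((fun y => -(f y)) x)^2 ≤ 1/4 := by
        have he : ∀ x, pi x * ((fun y => -(f y)) x)^2 = pi x * (f x)^2 := by
          intro x; simp only; ring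
        rw [Finset.sum_congr rfl fun x _ => he x]
        exact hf2
      -- tail bound
      have tail : ∀ g : Fin k → ℝ, (∀ x, |g x| ≤ 1) → (∑ x, pi x * g x = 0) →
          (∑ x, pi x * (g x)^2 ≤ 1/4) → ∀ l : ℝ, 0 < l → l ≤ δ/9 →
          ∑ x ∈ Finset.univ.filter (fun x : Fin (m2+2) → Fin k => t < DsumF g (m2+2) x),
            seqProb (m2+2) μ M x
          ≤ Real.exp (-(l*t)) * ((89/100)/Real.sqrt δ * Real.exp ((m2:ℝ)*(l^2/(2*δ)))) := by
        intro g hg1 hg0 hg2 l hl0 hl9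
        calc ∑ x ∈ Finset.univ.filter (fun x : Fin (m2+2) → Fin k => t < DsumF g (m2+2) x),
              seqProb (m2+2) μ M x
            ≤ Real.exp (-(l*t)) * ∑ x : Fin (m2+2) → Fin k,
                seqProb (m2+2) μ M x * Real.exp (l * DsumF g (m2+2) x) :=
              chernoff M hM g (m2+2) μ hμ.1 l t hl0.le
          _ = Real.exp (-(l*t)) * ∑ z, (Tstep M g l)^[(m2+2)-1] μ z := by
              rw [pathsum_eq M g l (m2+2) (by omega) μ]
          _ ≤ Real.exp (-(l*t)) * ((89/100)/Real.sqrt δ * Real.exp ((m2:ℝ)*(l^2/(2*δ)))) := by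
              apply mul_le_mul_of_nonneg_left _ (Real.exp_pos _).le
              exact mgf_bound δ l M pi g μ hk2 hδ0 hδ2 hM hδM hpi.1 hpi.2 hμ hg1 hg0 hg2
                hl0 hl9 m2
      -- choose l
      have main : ∃ l : ℝ, 0 < l ∧ l ≤ δ/9 ∧ (14/10)*T ≤ l*t - (m2:ℝ)*(l^2/(2*δ)) := by
        have hm2R : (0:ℝ) ≤ (m2:ℝ) := Nat.cast_nonneg _
        have hcastn : ((m2+2:ℕ):ℝ) = (m2:ℝ) + 2 := by push_cast; ring
        by_cases hcase : 9*t ≤ (m2:ℝ)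
        · have hm2pos : (0:ℝ) < (m2:ℝ) := by nlinarith
          refine ⟨t*δ/(m2:ℝ), div_pos (mul_pos ht0 hδ0) hm2pos, ?_, ?_⟩
          · rw [div_le_div_iff₀ hm2pos (by norm_num : (0:ℝ) < 9)]
            nlinarith
          · have hEeq : (t*δ/(m2:ℝ))*t - (m2:ℝ)*((t*δ/(m2:ℝ))^2/(2*δ))
                = t^2*δ/(2*(m2:ℝ)) := by
              field_simp
              ring
            rw [hEeq, hTdef, div_div]
            have hDen4 : 4*(m2:ℝ) ≤ 4 * ((((m2+2:ℕ)):ℝ) - 1 + 2 * C) + 40 * t := by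
              rw [hcastn]
              nlinarith
            have hkey : (28/10)*(m2:ℝ)
                ≤ δ*(C*(4 * ((((m2+2:ℕ)):ℝ) - 1 + 2 * C) + 40 * t)) := by
              have h1 : (δ*C)*(4*(m2:ℝ)) ≤ (δ*C)*(4 * ((((m2+2:ℕ)):ℝ) - 1 + 2 * C) + 40 * t) :=
                mul_le_mul_of_nonneg_left hDen4 (by positivity)
              have h2 : (119/100)*(4*(m2:ℝ)) ≤ (C*δ)*(4*(m2:ℝ)) :=
                mul_le_mul_of_nonneg_right hCb (by positivity)
              nlinarith
            rw [mul_div_assoc' (14/10) (t^2) _, div_le_div_iff₀ (by positivity) (by positivity)]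
            nlinarith [mul_le_mul_of_nonneg_left hkey (sq_nonneg t)]
        · push_neg at hcase
          refine ⟨δ/9, by positivity, le_refl _, ?_⟩
          have hEeq : (δ/9)*t - (m2:ℝ)*((δ/9)^2/(2*δ)) = δ*t/9 - (m2:ℝ)*δ/162 := by
            field_simp
            ring
          rw [hEeq]
          have hElb : δ*t/18 ≤ δ*t/9 - (m2:ℝ)*δ/162 := by nlinarith
          have h40 : C*(40*t) ≤ C*(4 * ((((m2+2:ℕ)):ℝ) - 1 + 2 * C) + 40 * t) := by
            apply mul_le_mul_of_nonneg_left _ hC0.le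
            rw [hcastn]
            nlinarith
          have hTle : T ≤ t^2/(C*(40*t)) := by
            rw [hTdef, div_div]
            exact div_le_div_of_nonneg_left (by positivity) (by positivity) h40
          have hT40 : t^2/(C*(40*t)) = t/(40*C) := by
            field_simp
          rw [hT40] at hTle
          have hc9 : (14/10)*(t/(40*C)) ≤ δ*t/18 := by
            rw [mul_div_assoc' (14/10) t _, div_le_div_iff₀ (by positivity) (by norm_num : (0:ℝ) < 18)]
            nlinarith [mul_le_mul_of_nonneg_left hCb (by positivity : (0:ℝ) ≤ 40*t)]
          nlinarith
      obtain ⟨l, hl0, hl9, hE⟩ := main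
      -- filters
      have hDeq : ∀ x : Fin (m2+2) → Fin k,
          (countState x i : ℝ) - (((m2+2:ℕ):ℝ) - 1) * pi i = DsumF f (m2+2) x := by
        intro x
        rw [countState_eq (m2+2) (by omega) x i (pi i), ← hfdef]
      have hfilter_eq : (Finset.univ.filter (fun x : Fin (m2+2) → Fin k =>
            t < |(countState x i : ℝ) - (((m2+2:ℕ):ℝ) - 1) * pi i|))
          = (Finset.univ.filter (fun x : Fin (m2+2) → Fin k => t < DsumF f (m2+2) x))
            ∪ (Finset.univ.filter (fun x : Fin (m2+2) → Fin k =>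
                t < DsumF (fun y => -(f y)) (m2+2) x)) := by
        ext x
        simp only [Finset.mem_filter, Finset.mem_union, Finset.mem_univ, true_and]
        rw [hDeq x, DsumF_neg, lt_abs]
      have hdisj : Disjoint
          (Finset.univ.filter (fun x : Fin (m2+2) → Fin k => t < DsumF f (m2+2) x))
          (Finset.univ.filter (fun x : Fin (m2+2) → Fin k =>
            t < DsumF (fun y => -(f y)) (m2+2) x)) := by
        rw [Finset.disjoint_left]
        intro a ha hb
        have h1 : t < DsumF f (m2+2) a := (Finset.mem_filter.1 ha).2
        have h2 : t < DsumF (fun y => -(f y)) (m2+2) a := (Finset.mem_filter.1 hb).2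
        rw [DsumF_neg] at h2
        linarith
      rw [hfilter_eq, Finset.sum_union hdisj]
      have htailf := tail f hf1 hf0 hf2 l hl0 hl9
      have htailf' := tail (fun y => -(f y)) hf1' hf0' hf2' l hl0 hl9
      set K := Real.exp (-(l*t)) * ((89/100)/Real.sqrt δ * Real.exp ((m2:ℝ)*(l^2/(2*δ))))
        with hK
      have hsd0 : 0 < Real.sqrt δ := Real.sqrt_pos.2 hδ0
      refine le_trans (add_le_add htailf htailf') ?_
      have hcl := closing δ t T l (m2:ℝ) hδ0 hT2 hE
      have hexpprod : Real.exp (-(l*t)) * Real.exp ((m2:ℝ)*(l^2/(2*δ)))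
          = Real.exp ((m2:ℝ)*(l^2/(2*δ)) - l*t) := by
        rw [← Real.exp_add]
        ring_nf
      have hKK : K + K = (178/100 * Real.exp ((m2:ℝ)*(l^2/(2*δ)) - l*t)) * (1/Real.sqrt δ) := by
        rw [hK, ← hexpprod]
        ring
      have hRHS : Real.sqrt (2/δ) * Real.exp (-T)
          = (Real.sqrt 2 * Real.exp (-T)) * (1/Real.sqrt δ) := by
        rw [show Real.sqrt (2/δ) = Real.sqrt 2 / Real.sqrt δ from
          Real.sqrt_div (by norm_num) δ]
        ring
      rw [hKK, hRHS]
      apply mul_le_mul_of_nonneg_right hcl (by positivity)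
end
end
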